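/- arXiv:2002.11349 — 6 statements merged into one kernel-verified Lean document; each statement's English description precedes it below -/
import Mathlib

section
/- Under the allocation rule ELinUCB-S, fix a sequence of context arrivals {x_t} and a click realization ρ. For any two bid vectors b and b′, and any round t, if agent i belongs to both active sets S_act(b, t) and S_act(b′, t), then μ_i^-(b, t)/b_i = μ_i^-(b′, t)/b_i′ and μ_i^+(b, t)/b_i = μ_i^+(b′, t)/b_i′, where μ_i^-(b, t) and μ_i^+(b, t) denote the lower and upper confidence bounds maintained by the algorithm for agent i at the beginning of round t when the bid vector is b. -/
/-!
ELinUCB-S (LinUCB-based allocation rule for single-slot SSA).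

The state of the algorithm consists of the active set `act`, the per-agent
matrices `A`, vectors `c`, and the lower/upper confidence bounds `lo`, `hi`.
`elinRun b α x r t` is the state at the beginning of round `t`
(i.e. after `t` completed rounds, rounds being numbered `0, 1, 2, …`),
when the bid vector is `b`, the learning parameter is `α`, the context
sequence is `x` and the click realization is `r` (where `r t i` tells whether
agent `i`'s ad would be clicked if displayed at round `t`).
-/

open Matrix
open scoped Classical

structure ELinState (n d : ℕ) where
  act : Finset (Fin n)
  A : Fin n → Matrix (Fin d) (Fin d) ℝ
  c : Fin n → (Fin d → ℝ)
  lo : Fin n → ℝ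
  hi : Fin n → ℝ

variable {n d : ℕ}

/-- Initial state: all agents active, `A_i = I_d`, `c_i = 0`, `μ_i^- = 0`, `μ_i^+ = b_i`. -/
def elinInit (b : Fin n → ℝ) : ELinState n d :=
  ⟨Finset.univ, fun _ => 1, fun _ => 0, fun _ => 0, b⟩

/-- The designated (round-robin) agent of round `t`. -/
def desig (n : ℕ) [NeZero n] (t : ℕ) : Fin n :=
  ⟨t % n, Nat.mod_lt t (NeZero.pos n)⟩

/-- One round of ELinUCB-S: exploration (with parameter and confidence-bound updates)
if the designated agent is active, exploitation (no updates) otherwise, followed by the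
elimination step. -/
noncomputable def elinStep [NeZero n] (b : Fin n → ℝ) (α : ℝ)
    (xt : Fin d → ℝ) (rt : Fin n → Bool) (t : ℕ) (st : ELinState n d) :
    ELinState n d :=
  let j : Fin n := desig n t
  let st1 : ELinState n d :=
    if j ∈ st.act then
      -- exploration round for agent j
      let A' := st.A j + vecMulVec xt xt
      let c' := st.c j + (if rt j then (1 : ℝ) else 0) • xt
      let θ : Fin d → ℝ := A'⁻¹ *ᵥ c'
      let γm := b j * (θ ⬝ᵥ xt - α * Real.sqrt (xt ⬝ᵥ (A'⁻¹ *ᵥ xt)))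
      let γp := b j * (θ ⬝ᵥ xt + α * Real.sqrt (xt ⬝ᵥ (A'⁻¹ *ᵥ xt)))
      let newlo : ℝ :=
        if st.lo j < st.hi j then
          if max (st.lo j) γm < min (st.hi j) γp then max (st.lo j) γm
          else (st.lo j + st.hi j) / 2
        else st.lo j
      let newhi : ℝ :=
        if st.lo j < st.hi j then
          if max (st.lo j) γm < min (st.hi j) γp then min (st.hi j) γp
          else (st.lo j + st.hi j) / 2
        else st.hi j
      { act := st.act
        A := Function.update st.A j A'
        c := Function.update st.c j c'
        lo := Function.update st.lo j newlo
        hi := Function.update st.hi j newhi }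
    else
      -- exploitation round: no parameter updates
      st
  -- elimination: remove every agent whose UCB is below the best LCB among active agents
  { st1 with act := st1.act.filter (fun i => ∀ k ∈ st1.act, st1.lo k ≤ st1.hi i) }

/-- State of ELinUCB-S at the beginning of round `t`. -/
noncomputable def elinRun [NeZero n] (b : Fin n → ℝ) (α : ℝ)
    (x : ℕ → Fin d → ℝ) (r : ℕ → Fin n → Bool) : ℕ → ELinState n d
  | 0 => elinInit b
  | t + 1 => elinStep b α (x t) (r t) t (elinRun b α x r t)

section Helpers
variable {n d : ℕ} [NeZero n]

lemma elinStep_act_subset (b : Fin n → ℝ) (α : ℝ) (xt : Fin d → ℝ)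
    (rt : Fin n → Bool) (t : ℕ) (st : ELinState n d) :
    (elinStep b α xt rt t st).act ⊆ st.act := by
  intro k hk
  by_cases hj : desig n t ∈ st.act <;>
    simp only [elinStep, hj, if_pos, if_neg, Finset.mem_filter] at hk <;>
    exact hk.1

lemma elinStep_ne (b : Fin n → ℝ) (α : ℝ) (xt : Fin d → ℝ)
    (rt : Fin n → Bool) (t : ℕ) (st : ELinState n d) {i : Fin n}
    (hne : desig n t ≠ i) :
    (elinStep b α xt rt t st).A i = st.A i ∧
    (elinStep b α xt rt t st).c i = st.c i ∧
    (elinStep b α xt rt t st).lo i = st.lo i ∧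
    (elinStep b α xt rt t st).hi i = st.hi i := by
  by_cases hj : desig n t ∈ st.act <;>
    simp [elinStep, hj, Function.update_of_ne (Ne.symm hne)]

lemma elinStep_eq (b : Fin n → ℝ) (α : ℝ) (xt : Fin d → ℝ)
    (rt : Fin n → Bool) (t : ℕ) (st : ELinState n d) {i : Fin n}
    (hji : desig n t = i) (hi : i ∈ st.act) :
    (elinStep b α xt rt t st).A i = st.A i + vecMulVec xt xt ∧
    (elinStep b α xt rt t st).c i = st.c i + (if rt i then (1:ℝ) else 0) • xt ∧
    (elinStep b α xt rt t st).lo i =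
      (let A' := st.A i + vecMulVec xt xt
       let c' := st.c i + (if rt i then (1:ℝ) else 0) • xt
       let θ : Fin d → ℝ := A'⁻¹ *ᵥ c'
       let γm := b i * (θ ⬝ᵥ xt - α * Real.sqrt (xt ⬝ᵥ (A'⁻¹ *ᵥ xt)))
       let γp := b i * (θ ⬝ᵥ xt + α * Real.sqrt (xt ⬝ᵥ (A'⁻¹ *ᵥ xt)))
       if st.lo i < st.hi i then
         if max (st.lo i) γm < min (st.hi i) γp then max (st.lo i) γm
         else (st.lo i + st.hi i) / 2
       else st.lo i) ∧
    (elinStep b α xt rt t st).hi i =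
      (let A' := st.A i + vecMulVec xt xt
       let c' := st.c i + (if rt i then (1:ℝ) else 0) • xt
       let θ : Fin d → ℝ := A'⁻¹ *ᵥ c'
       let γm := b i * (θ ⬝ᵥ xt - α * Real.sqrt (xt ⬝ᵥ (A'⁻¹ *ᵥ xt)))
       let γp := b i * (θ ⬝ᵥ xt + α * Real.sqrt (xt ⬝ᵥ (A'⁻¹ *ᵥ xt)))
       if st.lo i < st.hi i then
         if max (st.lo i) γm < min (st.hi i) γp then min (st.hi i) γp
         else (st.lo i + st.hi i) / 2
       else st.hi i) := by
  subst hji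
  simp [elinStep, hi]

end Helpers
lemma elin_key {n d : ℕ} [NeZero n] (α : ℝ)
    (x : ℕ → Fin d → ℝ) (r : ℕ → Fin n → Bool)
    (b b' : Fin n → ℝ) {i : Fin n} (hbpos : 0 < b i) (hb'pos : 0 < b' i) :
    ∀ t : ℕ, i ∈ (elinRun b α x r t).act → i ∈ (elinRun b' α x r t).act →
      (elinRun b α x r t).A i = (elinRun b' α x r t).A i ∧
      (elinRun b α x r t).c i = (elinRun b' α x r t).c i ∧
      ∃ L H : ℝ,
        (elinRun b α x r t).lo i = b i * L ∧ (elinRun b' α x r t).lo i = b' i * L ∧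
        (elinRun b α x r t).hi i = b i * H ∧ (elinRun b' α x r t).hi i = b' i * H := by
  intro t
  induction t with
  | zero =>
    intro _ _
    refine ⟨rfl, rfl, 0, 1, ?_, ?_, ?_, ?_⟩ <;> simp [elinRun, elinInit]
  | succ t ih =>
    intro hmem hmem'
    rw [elinRun] at hmem hmem'
    have hm : i ∈ (elinRun b α x r t).act := elinStep_act_subset _ _ _ _ _ _ hmem
    have hm' : i ∈ (elinRun b' α x r t).act := elinStep_act_subset _ _ _ _ _ _ hmem'
    obtain ⟨hA, hc, L, H, hL, hL', hH, hH'⟩ := ih hm hm'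
    by_cases hji : desig n t = i
    · obtain ⟨e1, e2, e3, e4⟩ := elinStep_eq b α (x t) (r t) t _ hji hm
      obtain ⟨e1', e2', e3', e4'⟩ := elinStep_eq b' α (x t) (r t) t _ hji hm'
      dsimp only at e3 e4 e3' e4'
      rw [hA, hc, hL, hH] at e3 e4
      rw [hL', hH'] at e3' e4'
      set A' := (elinRun b' α x r t).A i + vecMulVec (x t) (x t) with hA'def
      set c' := (elinRun b' α x r t).c i + (if r t i then (1:ℝ) else 0) • (x t) with hc'def
      set K := (A'⁻¹ *ᵥ c') ⬝ᵥ (x t) with hK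
      set s := α * Real.sqrt ((x t) ⬝ᵥ (A'⁻¹ *ᵥ (x t))) with hs
      refine ⟨?_, ?_, ?_⟩
      · simp only [elinRun]; rw [e1, e1', hA]
      · simp only [elinRun]; rw [e2, e2', hc]
      refine ⟨if L < H then (if max L (K - s) < min H (K + s) then max L (K - s)
                else (L + H) / 2) else L,
              if L < H then (if max L (K - s) < min H (K + s) then min H (K + s)
                else (L + H) / 2) else H, ?_, ?_, ?_, ?_⟩
      · rw [elinRun, e3]
        simp only [← mul_max_of_nonneg _ _ hbpos.le,
          ← mul_min_of_nonneg _ _ hbpos.le, mul_lt_mul_iff_right₀ hbpos]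
        split_ifs <;> ring
      · rw [elinRun, e3']
        simp only [← mul_max_of_nonneg _ _ hb'pos.le,
          ← mul_min_of_nonneg _ _ hb'pos.le, mul_lt_mul_iff_right₀ hb'pos]
        split_ifs <;> ring
      · rw [elinRun, e4]
        simp only [← mul_max_of_nonneg _ _ hbpos.le,
          ← mul_min_of_nonneg _ _ hbpos.le, mul_lt_mul_iff_right₀ hbpos]
        split_ifs <;> ring
      · rw [elinRun, e4']
        simp only [← mul_max_of_nonneg _ _ hb'pos.le,
          ← mul_min_of_nonneg _ _ hb'pos.le, mul_lt_mul_iff_right₀ hb'pos]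
        split_ifs <;> ring
    · obtain ⟨e1, e2, e3, e4⟩ := elinStep_ne b α (x t) (r t) t (elinRun b α x r t) hji
      obtain ⟨e1', e2', e3', e4'⟩ := elinStep_ne b' α (x t) (r t) t (elinRun b' α x r t) hji
      refine ⟨?_, ?_, L, H, ?_, ?_, ?_, ?_⟩ <;>
        simp only [elinRun] <;>
        simp only [e1, e2, e3, e4, e1', e2', e3', e4', hA, hc, hL, hL', hH, hH']

/-- **Claim 1.** For a fixed sequence of context arrivals and a fixed click realization,
for any two bid vectors `b`, `b'` and any round `t`, if agent `i` is in both active sets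
`S_act(b, t)` and `S_act(b', t)`, then `μ_i^-(b,t)/b_i = μ_i^-(b',t)/b'_i` and
`μ_i^+(b,t)/b_i = μ_i^+(b',t)/b'_i`. -/
theorem elinucb_s_normalized_bounds_bid_independent
    {n d : ℕ} [NeZero n] (α : ℝ) (hα : 0 < α)
    (x : ℕ → Fin d → ℝ) (hx : ∀ t j, x t j ∈ Set.Icc (0 : ℝ) 1)
    (r : ℕ → Fin n → Bool)
    (b b' : Fin n → ℝ)
    (hb : ∀ i, b i ∈ Set.Ioc (0 : ℝ) 1) (hb' : ∀ i, b' i ∈ Set.Ioc (0 : ℝ) 1)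
    (t : ℕ) (i : Fin n)
    (hmem : i ∈ (elinRun b α x r t).act) (hmem' : i ∈ (elinRun b' α x r t).act) :
    (elinRun b α x r t).lo i / b i = (elinRun b' α x r t).lo i / b' i ∧
    (elinRun b α x r t).hi i / b i = (elinRun b' α x r t).hi i / b' i := by
  obtain ⟨-, -, L, H, hL, hL', hH, hH'⟩ :=
    elin_key α x r b b' (hb i).1 (hb' i).1 t hmem hmem'
  rw [hL, hL', hH, hH', mul_div_cancel_left₀ _ (hb i).1.ne',
    mul_div_cancel_left₀ _ (hb' i).1.ne', mul_div_cancel_left₀ _ (hb i).1.ne',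
    mul_div_cancel_left₀ _ (hb' i).1.ne']
  exact ⟨rfl, rfl⟩
end

section
/- Under the allocation rule ELinUCB-S, fix a sequence of context arrivals and a click realization. Let b^+ and b be two bid vectors with b_i^+ ≥ b_i and b_j^+ = b_j for all j ≠ i. If for every round τ ∈ {1,…,T} agent i satisfies i ∈ S_act(b^+, τ) ∩ S_act(b, τ), then for all τ ∈ {1,…,T} the active sets satisfy S_act(b^+, τ) ⊆ S_act(b, τ). -/
/-!
ELinUCB-S (LinUCB-based allocation rule for single-slot SSA).

The state of the algorithm consists of the active set `act`, the per-agent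
matrices `A`, vectors `c`, and the lower/upper confidence bounds `lo`, `hi`.
`elinRun b α x r t` is the state at the beginning of round `t`
(i.e. after `t` completed rounds, rounds being numbered `0, 1, 2, …`),
when the bid vector is `b`, the learning parameter is `α`, the context
sequence is `x` and the click realization is `r` (where `r t i` tells whether
agent `i`'s ad would be clicked if displayed at round `t`).
-/

open Matrix
open scoped Classical

variable {n d : ℕ}

/-! ### Auxiliary machinery -/

section ClaimAux

/-- New lower confidence bound produced by one update. -/
noncomputable def nlo (l h gm gp : ℝ) : ℝ :=
  if l < h then if max l gm < min h gp then max l gm else (l + h) / 2 else l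

/-- New upper confidence bound produced by one update. -/
noncomputable def nhi (l h gm gp : ℝ) : ℝ :=
  if l < h then if max l gm < min h gp then min h gp else (l + h) / 2 else h

lemma le_nlo (l h gm gp : ℝ) : l ≤ nlo l h gm gp := by
  unfold nlo; split_ifs with h1 h2
  · exact le_max_left _ _
  · linarith
  · exact le_rfl

lemma nhi_le (l h gm gp : ℝ) : nhi l h gm gp ≤ h := by
  unfold nhi; split_ifs with h1 h2
  · exact min_le_left _ _
  · linarith
  · exact le_rfl

lemma nlo_le_nhi {l h : ℝ} (hlh : l ≤ h) (gm gp : ℝ) : nlo l h gm gp ≤ nhi l h gm gp := by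
  unfold nlo nhi; split_ifs with h1 h2
  · exact h2.le
  · exact le_rfl
  · exact hlh

lemma nlo_smul {lam : ℝ} (hl : 0 < lam) (l h gm gp : ℝ) :
    nlo (lam * l) (lam * h) (lam * gm) (lam * gp) = lam * nlo l h gm gp := by
  unfold nlo
  rw [← mul_max_of_nonneg _ _ hl.le, ← mul_min_of_nonneg _ _ hl.le]
  simp only [mul_lt_mul_iff_right₀ hl]
  split_ifs <;> ring

lemma nhi_smul {lam : ℝ} (hl : 0 < lam) (l h gm gp : ℝ) :
    nhi (lam * l) (lam * h) (lam * gm) (lam * gp) = lam * nhi l h gm gp := by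
  unfold nhi
  rw [← mul_max_of_nonneg _ _ hl.le, ← mul_min_of_nonneg _ _ hl.le]
  simp only [mul_lt_mul_iff_right₀ hl]
  split_ifs <;> ring

/-- The exploration update of agent `j` with bid `bj`. -/
noncomputable def expl (bj : ℝ) (α : ℝ) (xt : Fin d → ℝ) (rt : Fin n → Bool)
    (j : Fin n) (st : ELinState n d) : ELinState n d :=
  let A' := st.A j + vecMulVec xt xt
  let c' := st.c j + (if rt j then (1 : ℝ) else 0) • xt
  let gm := bj * ((A'⁻¹ *ᵥ c') ⬝ᵥ xt - α * Real.sqrt (xt ⬝ᵥ (A'⁻¹ *ᵥ xt)))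
  let gp := bj * ((A'⁻¹ *ᵥ c') ⬝ᵥ xt + α * Real.sqrt (xt ⬝ᵥ (A'⁻¹ *ᵥ xt)))
  { act := st.act
    A := Function.update st.A j A'
    c := Function.update st.c j c'
    lo := Function.update st.lo j (nlo (st.lo j) (st.hi j) gm gp)
    hi := Function.update st.hi j (nhi (st.lo j) (st.hi j) gm gp) }

/-- The elimination step. -/
noncomputable def elinElim (st : ELinState n d) : ELinState n d :=
  { st with act := st.act.filter (fun i => ∀ k ∈ st.act, st.lo k ≤ st.hi i) }

lemma elinStep_eq_s2 [NeZero n] (b : Fin n → ℝ) (α : ℝ)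
    (xt : Fin d → ℝ) (rt : Fin n → Bool) (t : ℕ) (st : ELinState n d) :
    elinStep b α xt rt t st =
      elinElim (if desig n t ∈ st.act
        then expl (b (desig n t)) α xt rt (desig n t) st else st) := rfl

@[simp] lemma expl_act (bj α xt rt) (j : Fin n) (st : ELinState n d) :
    (expl bj α xt rt j st).act = st.act := rfl

lemma expl_ne (bj α xt rt) {j q : Fin n} (st : ELinState n d) (h : q ≠ j) :
    (expl bj α xt rt j st).A q = st.A q ∧ (expl bj α xt rt j st).c q = st.c q ∧
    (expl bj α xt rt j st).lo q = st.lo q ∧ (expl bj α xt rt j st).hi q = st.hi q := by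
  simp [expl, Function.update_of_ne h]

lemma expl_lo_mono (bj α xt rt) (j : Fin n) (st : ELinState n d) (q : Fin n) :
    st.lo q ≤ (expl bj α xt rt j st).lo q := by
  rcases eq_or_ne q j with rfl | h
  · simp only [expl, Function.update_self]; exact le_nlo _ _ _ _
  · rw [(expl_ne bj α xt rt st h).2.2.1]

lemma expl_hi_mono (bj α xt rt) (j : Fin n) (st : ELinState n d) (q : Fin n) :
    (expl bj α xt rt j st).hi q ≤ st.hi q := by
  rcases eq_or_ne q j with rfl | h
  · simp only [expl, Function.update_self]; exact nhi_le _ _ _ _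
  · rw [(expl_ne bj α xt rt st h).2.2.2]

lemma expl_interval (bj α xt rt) (j : Fin n) (st : ELinState n d)
    (h : ∀ q, 0 ≤ st.lo q ∧ st.lo q ≤ st.hi q) (q : Fin n) :
    0 ≤ (expl bj α xt rt j st).lo q ∧
      (expl bj α xt rt j st).lo q ≤ (expl bj α xt rt j st).hi q := by
  refine ⟨(h q).1.trans (expl_lo_mono bj α xt rt j st q), ?_⟩
  rcases eq_or_ne q j with rfl | hq
  · simp only [expl, Function.update_self]; exact nlo_le_nhi (h q).2 _ _
  · rw [(expl_ne bj α xt rt st hq).2.2.1, (expl_ne bj α xt rt st hq).2.2.2]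
    exact (h q).2

lemma expl_congr {s' s : ELinState n d} {j : Fin n}
    (hA : s'.A j = s.A j) (hc : s'.c j = s.c j)
    (hlo : s'.lo j = s.lo j) (hhi : s'.hi j = s.hi j) (bj α xt rt) :
    (expl bj α xt rt j s').A j = (expl bj α xt rt j s).A j ∧
    (expl bj α xt rt j s').c j = (expl bj α xt rt j s).c j ∧
    (expl bj α xt rt j s').lo j = (expl bj α xt rt j s).lo j ∧
    (expl bj α xt rt j s').hi j = (expl bj α xt rt j s).hi j := by
  simp [expl, hA, hc, hlo, hhi]

lemma expl_scale {lam : ℝ} (hl : 0 < lam) {bj' bj : ℝ} (hb : bj' = lam * bj)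
    {s' s : ELinState n d} {j : Fin n}
    (hA : s'.A j = s.A j) (hc : s'.c j = s.c j)
    (hlo : s'.lo j = lam * s.lo j) (hhi : s'.hi j = lam * s.hi j) (α xt rt) :
    (expl bj' α xt rt j s').A j = (expl bj α xt rt j s).A j ∧
    (expl bj' α xt rt j s').c j = (expl bj α xt rt j s).c j ∧
    (expl bj' α xt rt j s').lo j = lam * (expl bj α xt rt j s).lo j ∧
    (expl bj' α xt rt j s').hi j = lam * (expl bj α xt rt j s).hi j := by
  simp only [expl, Function.update_self, hA, hc, hlo, hhi, hb]
  refine ⟨trivial, trivial, ?_, ?_⟩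
  · rw [mul_assoc, mul_assoc]; exact nlo_smul hl _ _ _ _
  · rw [mul_assoc, mul_assoc]; exact nhi_smul hl _ _ _ _

@[simp] lemma elinElim_A (st : ELinState n d) : (elinElim st).A = st.A := rfl
@[simp] lemma elinElim_c (st : ELinState n d) : (elinElim st).c = st.c := rfl
@[simp] lemma elinElim_lo (st : ELinState n d) : (elinElim st).lo = st.lo := rfl
@[simp] lemma elinElim_hi (st : ELinState n d) : (elinElim st).hi = st.hi := rfl

lemma mem_elinElim {st : ELinState n d} {q : Fin n} :
    q ∈ (elinElim st).act ↔ q ∈ st.act ∧ ∀ k ∈ st.act, st.lo k ≤ st.hi q :=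
  Finset.mem_filter

/-- The invariant relating the `b⁺`-run state `s'` to the `b`-run state `s`. -/
def ELinInv (i : Fin n) (lam : ℝ) (s' s : ELinState n d) : Prop :=
  s'.act ⊆ s.act ∧
  (∀ j ∈ s'.act, j ≠ i →
    s'.A j = s.A j ∧ s'.c j = s.c j ∧ s'.lo j = s.lo j ∧ s'.hi j = s.hi j) ∧
  s'.A i = s.A i ∧ s'.c i = s.c i ∧ s'.lo i = lam * s.lo i ∧ s'.hi i = lam * s.hi i ∧
  (∀ k, 0 ≤ s.lo k ∧ s.lo k ≤ s.hi k) ∧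
  (∀ k, 0 ≤ s'.lo k ∧ s'.lo k ≤ s'.hi k) ∧
  (∀ k ∈ s.act, k ∉ s'.act → ∃ m ∈ s'.act, s.hi k < s'.lo m)

lemma elim_inv {i : Fin n} {lam : ℝ} (hlam : 1 ≤ lam) {s' s : ELinState n d}
    (h : ELinInv i lam s' s)
    (hi1 : i ∈ (elinElim s').act) (hi2 : i ∈ (elinElim s).act) :
    ELinInv i lam (elinElim s') (elinElim s) := by
  obtain ⟨hsub, heq, hAi, hci, hloi, hhii, hint, hint', helim⟩ := h
  have hi1' : i ∈ s'.act := (mem_elinElim.mp hi1).1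
  refine ⟨?_, ?_, hAi, hci, hloi, hhii, hint, hint', ?_⟩
  · -- active set inclusion
    intro j hj
    rcases eq_or_ne j i with rfl | hji
    · exact hi2
    obtain ⟨hj1, hj2⟩ := mem_elinElim.mp hj
    refine mem_elinElim.mpr ⟨hsub hj1, fun k hk => ?_⟩
    have hhj : s.hi j = s'.hi j := ((heq j hj1 hji).2.2.2).symm
    rw [hhj]
    by_cases hk' : k ∈ s'.act
    · rcases eq_or_ne k i with rfl | hki
      · calc s.lo k ≤ lam * s.lo k :=
              le_mul_of_one_le_left (hint k).1 hlam
          _ = s'.lo k := hloi.symm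
          _ ≤ s'.hi j := hj2 k hk'
      · rw [← (heq k hk' hki).2.2.1]; exact hj2 k hk'
    · obtain ⟨m, hm, hlt⟩ := helim k hk hk'
      exact le_trans ((hint k).2.trans hlt.le) (hj2 m hm)
  · -- equal states for active agents ≠ i
    intro j hj hji
    exact heq j (mem_elinElim.mp hj).1 hji
  · -- domination property
    intro k hk hk'
    obtain ⟨mx, hmx, hmax⟩ := s'.act.exists_max_image s'.lo ⟨i, hi1'⟩
    have hmx' : mx ∈ (elinElim s').act :=
      mem_elinElim.mpr ⟨hmx, fun q hq => (hmax q hq).trans (hint' mx).2⟩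
    have hk1 : k ∈ s.act := (mem_elinElim.mp hk).1
    refine ⟨mx, hmx', ?_⟩
    by_cases hks : k ∈ s'.act
    · have hkne : k ≠ i := fun hkeq => hk' (hkeq ▸ hi1)
      have : ¬(∀ q ∈ s'.act, s'.lo q ≤ s'.hi k) := fun hall =>
        hk' (mem_elinElim.mpr ⟨hks, hall⟩)
      push_neg at this
      obtain ⟨q, hq, hqlt⟩ := this
      calc (elinElim s).hi k = s.hi k := rfl
        _ = s'.hi k := ((heq k hks hkne).2.2.2).symm
        _ < s'.lo q := hqlt
        _ ≤ s'.lo mx := hmax q hq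
        _ = (elinElim s').lo mx := rfl
    · obtain ⟨m, hm, hlt⟩ := helim k hk1 hks
      exact lt_of_lt_of_le hlt (hmax m hm)

end ClaimAux

section ClaimAux2

lemma step1_inv {i : Fin n} {lam : ℝ} (hlam0 : 0 < lam) (hlam : 1 ≤ lam)
    {b' b : Fin n → ℝ} (hbi : b' i = lam * b i) (hbj : ∀ j, j ≠ i → b' j = b j)
    (α : ℝ) (xt : Fin d → ℝ) (rt : Fin n → Bool) (p : Fin n)
    {s' s : ELinState n d} (h : ELinInv i lam s' s) (hi1 : i ∈ s'.act) :
    ELinInv i lam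
      (if p ∈ s'.act then expl (b' p) α xt rt p s' else s')
      (if p ∈ s.act then expl (b p) α xt rt p s else s) := by
  obtain ⟨hsub, heq, hAi, hci, hloi, hhii, hint, hint', helim⟩ := h
  by_cases hp' : p ∈ s'.act
  · -- exploration in both runs
    have hp : p ∈ s.act := hsub hp'
    rw [if_pos hp', if_pos hp]
    refine ⟨?_, ?_, ?_, ?_, ?_, ?_, expl_interval _ α xt rt p s hint,
      expl_interval _ α xt rt p s' hint', ?_⟩
    · intro j hj; exact hsub hj
    · -- equal fields for active agents ≠ i
      intro j hj hji
      have hj' : j ∈ s'.act := hj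
      rcases eq_or_ne j p with rfl | hjp
      · rw [hbj j hji]
        obtain ⟨hA, hc, hlo, hhi⟩ := heq j hj' hji
        exact expl_congr hA hc hlo hhi (b j) α xt rt
      · obtain ⟨hA1, hc1, hlo1, hhi1⟩ := expl_ne (b' p) α xt rt s' hjp
        obtain ⟨hA2, hc2, hlo2, hhi2⟩ := expl_ne (b p) α xt rt s hjp
        rw [hA1, hc1, hlo1, hhi1, hA2, hc2, hlo2, hhi2]
        exact heq j hj' hji
    · -- A at i
      rcases eq_or_ne p i with rfl | hpi
      · exact (expl_scale hlam0 hbi hAi hci hloi hhii α xt rt).1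
      · rw [(expl_ne (b' p) α xt rt s' hpi.symm).1, (expl_ne (b p) α xt rt s hpi.symm).1]
        exact hAi
    · rcases eq_or_ne p i with rfl | hpi
      · exact (expl_scale hlam0 hbi hAi hci hloi hhii α xt rt).2.1
      · rw [(expl_ne (b' p) α xt rt s' hpi.symm).2.1, (expl_ne (b p) α xt rt s hpi.symm).2.1]
        exact hci
    · rcases eq_or_ne p i with rfl | hpi
      · exact (expl_scale hlam0 hbi hAi hci hloi hhii α xt rt).2.2.1
      · rw [(expl_ne (b' p) α xt rt s' hpi.symm).2.2.1,
          (expl_ne (b p) α xt rt s hpi.symm).2.2.1]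
        exact hloi
    · rcases eq_or_ne p i with rfl | hpi
      · exact (expl_scale hlam0 hbi hAi hci hloi hhii α xt rt).2.2.2
      · rw [(expl_ne (b' p) α xt rt s' hpi.symm).2.2.2,
          (expl_ne (b p) α xt rt s hpi.symm).2.2.2]
        exact hhii
    · -- domination
      intro k hk hk'
      obtain ⟨m, hm, hlt⟩ := helim k hk hk'
      exact ⟨m, hm,
        ((expl_hi_mono (b p) α xt rt p s k).trans_lt hlt).trans_le
          (expl_lo_mono (b' p) α xt rt p s' m)⟩
  · by_cases hp : p ∈ s.act
    · -- exploration only in the b-run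
      rw [if_neg hp', if_pos hp]
      have hpi : p ≠ i := fun hpe => hp' (hpe ▸ hi1)
      refine ⟨?_, ?_, ?_, ?_, ?_, ?_, expl_interval _ α xt rt p s hint, hint', ?_⟩
      · intro j hj; exact hsub hj
      · intro j hj hji
        have hjp : j ≠ p := fun hje => hp' (hje ▸ hj)
        obtain ⟨hA2, hc2, hlo2, hhi2⟩ := expl_ne (b p) α xt rt s hjp
        rw [hA2, hc2, hlo2, hhi2]
        exact heq j hj hji
      · rw [(expl_ne (b p) α xt rt s hpi.symm).1]; exact hAi
      · rw [(expl_ne (b p) α xt rt s hpi.symm).2.1]; exact hci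
      · rw [(expl_ne (b p) α xt rt s hpi.symm).2.2.1]; exact hloi
      · rw [(expl_ne (b p) α xt rt s hpi.symm).2.2.2]; exact hhii
      · intro k hk hk'
        obtain ⟨m, hm, hlt⟩ := helim k hk hk'
        exact ⟨m, hm, (expl_hi_mono (b p) α xt rt p s k).trans_lt hlt⟩
    · -- no exploration
      rw [if_neg hp', if_neg hp]
      exact ⟨hsub, heq, hAi, hci, hloi, hhii, hint, hint', helim⟩

lemma step_inv [NeZero n] {i : Fin n} {lam : ℝ} (hlam0 : 0 < lam) (hlam : 1 ≤ lam)
    {b' b : Fin n → ℝ} (hbi : b' i = lam * b i) (hbj : ∀ j, j ≠ i → b' j = b j)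
    (α : ℝ) (xt : Fin d → ℝ) (rt : Fin n → Bool) (t : ℕ)
    {s' s : ELinState n d} (h : ELinInv i lam s' s) (hi1 : i ∈ s'.act)
    (hs1 : i ∈ (elinStep b' α xt rt t s').act)
    (hs2 : i ∈ (elinStep b α xt rt t s).act) :
    ELinInv i lam (elinStep b' α xt rt t s') (elinStep b α xt rt t s) := by
  rw [elinStep_eq_s2] at hs1 hs2 ⊢
  exact elim_inv hlam (step1_inv hlam0 hlam hbi hbj α xt rt (desig n t) h hi1) hs1 hs2

end ClaimAux2


/-- **Claim 3.** Fix context arrivals and a click realization. Let `b⁺` and `b` be two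
bid vectors with `b_i⁺ ≥ b_i` and `b_j⁺ = b_j` for all `j ≠ i` (formalized as
`b⁺ = Function.update b i biplus` with `b i ≤ biplus`). If for every round `τ ≤ T`
agent `i` belongs to `S_act(b⁺, τ) ∩ S_act(b, τ)`, then for all `τ ≤ T`
we have `S_act(b⁺, τ) ⊆ S_act(b, τ)`. -/
theorem elinucb_s_active_set_inclusion
    {n d : ℕ} [NeZero n] (α : ℝ) (hα : 0 < α)
    (x : ℕ → Fin d → ℝ) (hx : ∀ t j, x t j ∈ Set.Icc (0 : ℝ) 1)
    (r : ℕ → Fin n → Bool)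
    (b : Fin n → ℝ) (hb : ∀ j, b j ∈ Set.Ioc (0 : ℝ) 1)
    (i : Fin n) (biplus : ℝ) (hbp : biplus ∈ Set.Ioc (0 : ℝ) 1)
    (hge : b i ≤ biplus)
    (T : ℕ)
    (hactive : ∀ τ ≤ T,
      i ∈ (elinRun (Function.update b i biplus) α x r τ).act ∧
      i ∈ (elinRun b α x r τ).act) :
    ∀ τ ≤ T,
      (elinRun (Function.update b i biplus) α x r τ).act ⊆ (elinRun b α x r τ).act := by
  set b' := Function.update b i biplus with hb'def
  have hbi0 : 0 < b i := (hb i).1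
  set lam := biplus / b i with hlamdef
  have hlam : 1 ≤ lam := (one_le_div hbi0).mpr hge
  have hlam0 : 0 < lam := lt_of_lt_of_le one_pos hlam
  have hbi' : b' i = lam * b i := by
    rw [hb'def, Function.update_self, hlamdef, div_mul_cancel₀ _ hbi0.ne']
  have hbj : ∀ j, j ≠ i → b' j = b j := fun j hj => Function.update_of_ne hj _ _
  have base : ELinInv i lam (elinInit b' : ELinState n d) (elinInit b) := by
    refine ⟨subset_rfl, ?_, rfl, rfl, (mul_zero lam).symm, hbi', ?_, ?_, ?_⟩
    · intro j _ hji
      exact ⟨rfl, rfl, rfl, hbj j hji⟩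
    · exact fun k => ⟨le_rfl, (hb k).1.le⟩
    · intro k
      refine ⟨le_rfl, ?_⟩
      rcases eq_or_ne k i with rfl | hki
      · show 0 ≤ b' k
        rw [hb'def, Function.update_self]; exact hbp.1.le
      · show 0 ≤ b' k
        rw [hbj k hki]; exact (hb k).1.le
    · exact fun k _ hk' => absurd (Finset.mem_univ k) hk'
  have key : ∀ τ, τ ≤ T → ELinInv i lam (elinRun b' α x r τ) (elinRun b α x r τ) := by
    intro τ
    induction τ with
    | zero => intro _; exact base
    | succ t ih =>
      intro ht
      have ht' : t ≤ T := le_trans (Nat.le_succ t) ht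
      show ELinInv i lam (elinStep b' α (x t) (r t) t (elinRun b' α x r t))
          (elinStep b α (x t) (r t) t (elinRun b α x r t))
      exact step_inv hlam0 hlam hbi' hbj α (x t) (r t) t (ih ht')
        (hactive t ht').1 (hactive (t + 1) ht).1 (hactive (t + 1) ht).2
  intro τ hτ
  exact (key τ hτ).1
end

section
/- Under the allocation rule ELinUCB-S, fix a sequence of context arrivals, a click realization, and the bids b_{-i} of all agents other than i. Let b = (b_i, b_{-i}) and b^+ = (b_i^+, b_{-i}) with b_i^+ > b_i. Then for every round t, if agent i ∈ S_act(b, t), then agent i ∈ S_act(b^+, t); i.e., raising one's own bid can only keep an agent in the active set longer. -/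
/-!
ELinUCB-S (LinUCB-based allocation rule for single-slot SSA).

The state of the algorithm consists of the active set `act`, the per-agent
matrices `A`, vectors `c`, and the lower/upper confidence bounds `lo`, `hi`.
`elinRun b α x r t` is the state at the beginning of round `t`
(i.e. after `t` completed rounds, rounds being numbered `0, 1, 2, …`),
when the bid vector is `b`, the learning parameter is `α`, the context
sequence is `x` and the click realization is `r` (where `r t i` tells whether
agent `i`'s ad would be clicked if displayed at round `t`).
-/

open Matrix
open scoped Classical

variable {n d : ℕ}

namespace ELinAux

variable {n d : ℕ}

/-- abstract lower-bound update of the confidence interval. -/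
noncomputable def newLo (L H gm gp : ℝ) : ℝ :=
  if L < H then (if max L gm < min H gp then max L gm else (L + H) / 2) else L

/-- abstract upper-bound update of the confidence interval. -/
noncomputable def newHi (L H gm gp : ℝ) : ℝ :=
  if L < H then (if max L gm < min H gp then min H gp else (L + H) / 2) else H

/-- the (bid-independent part of the) confidence-bound quantities `γ∓ / b j`. -/
noncomputable def gq (α : ℝ) (xt : Fin d → ℝ) (rtj : Bool)
    (A : Matrix (Fin d) (Fin d) ℝ) (c : Fin d → ℝ) : ℝ × ℝ :=
  ((((A + Matrix.vecMulVec xt xt)⁻¹ *ᵥ (c + (if rtj then (1:ℝ) else 0) • xt)) ⬝ᵥ xt)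
      - α * Real.sqrt (xt ⬝ᵥ ((A + Matrix.vecMulVec xt xt)⁻¹ *ᵥ xt)),
   (((A + Matrix.vecMulVec xt xt)⁻¹ *ᵥ (c + (if rtj then (1:ℝ) else 0) • xt)) ⬝ᵥ xt)
      + α * Real.sqrt (xt ⬝ᵥ ((A + Matrix.vecMulVec xt xt)⁻¹ *ᵥ xt)))

/-- the exploration update of `elinStep`. -/
noncomputable def explore (b : Fin n → ℝ) (α : ℝ) (xt : Fin d → ℝ) (rt : Fin n → Bool)
    (j : Fin n) (st : ELinState n d) : ELinState n d :=
  ⟨st.act,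
   Function.update st.A j (st.A j + Matrix.vecMulVec xt xt),
   Function.update st.c j (st.c j + (if rt j then (1:ℝ) else 0) • xt),
   Function.update st.lo j (newLo (st.lo j) (st.hi j)
     (b j * (gq α xt (rt j) (st.A j) (st.c j)).1) (b j * (gq α xt (rt j) (st.A j) (st.c j)).2)),
   Function.update st.hi j (newHi (st.lo j) (st.hi j)
     (b j * (gq α xt (rt j) (st.A j) (st.c j)).1) (b j * (gq α xt (rt j) (st.A j) (st.c j)).2))⟩

/-- the pre-elimination state of a round. -/
noncomputable def pre [NeZero n] (b : Fin n → ℝ) (α : ℝ) (xt : Fin d → ℝ) (rt : Fin n → Bool)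
    (t : ℕ) (st : ELinState n d) : ELinState n d :=
  if desig n t ∈ st.act then explore b α xt rt (desig n t) st else st

lemma elinStep_eq [NeZero n] (b : Fin n → ℝ) (α : ℝ) (xt : Fin d → ℝ) (rt : Fin n → Bool)
    (t : ℕ) (st : ELinState n d) :
    elinStep b α xt rt t st =
      ⟨st.act.filter (fun i => ∀ k ∈ st.act,
          (pre b α xt rt t st).lo k ≤ (pre b α xt rt t st).hi i),
       (pre b α xt rt t st).A, (pre b α xt rt t st).c,
       (pre b α xt rt t st).lo, (pre b α xt rt t st).hi⟩ := by
  by_cases h : desig n t ∈ st.act <;>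
    simp [elinStep, pre, explore, newLo, newHi, gq, h]

lemma pre_act [NeZero n] (b : Fin n → ℝ) (α : ℝ) (xt : Fin d → ℝ) (rt : Fin n → Bool)
    (t : ℕ) (st : ELinState n d) : (pre b α xt rt t st).act = st.act := by
  unfold pre; split <;> rfl

lemma mem_step_act [NeZero n] {b : Fin n → ℝ} {α : ℝ} {xt : Fin d → ℝ} {rt : Fin n → Bool}
    {t : ℕ} {st : ELinState n d} {k : Fin n} :
    k ∈ (elinStep b α xt rt t st).act ↔
      k ∈ st.act ∧ ∀ m ∈ st.act, (pre b α xt rt t st).lo m ≤ (pre b α xt rt t st).hi k := by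
  rw [elinStep_eq]; simp [Finset.mem_filter]

lemma newLoHi_basic {L H gm gp : ℝ} (h0 : 0 ≤ L) (h : L ≤ H) :
    0 ≤ newLo L H gm gp ∧ newLo L H gm gp ≤ newHi L H gm gp ∧
      L ≤ newLo L H gm gp ∧ newHi L H gm gp ≤ H := by
  unfold newLo newHi
  split_ifs with h1 h2
  · exact ⟨le_trans h0 (le_max_left _ _), le_of_lt h2, le_max_left _ _, min_le_left _ _⟩
  · exact ⟨by linarith, le_rfl, by linarith, by linarith⟩
  · exact ⟨h0, h, le_rfl, le_rfl⟩

lemma newLo_scale {ρ L H gm gp : ℝ} (hρ : 0 < ρ) :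
    newLo (ρ*L) (ρ*H) (ρ*gm) (ρ*gp) = ρ * newLo L H gm gp := by
  unfold newLo
  simp only [← mul_max_of_nonneg _ _ hρ.le, ← mul_min_of_nonneg _ _ hρ.le,
    mul_lt_mul_iff_right₀ hρ]
  split_ifs <;> ring

lemma newHi_scale {ρ L H gm gp : ℝ} (hρ : 0 < ρ) :
    newHi (ρ*L) (ρ*H) (ρ*gm) (ρ*gp) = ρ * newHi L H gm gp := by
  unfold newHi
  simp only [← mul_max_of_nonneg _ _ hρ.le, ← mul_min_of_nonneg _ _ hρ.le,
    mul_lt_mul_iff_right₀ hρ]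
  split_ifs <;> ring

/-- `pre` keeps the bounds and is monotone on `lo`, antitone on `hi`. -/
lemma pre_bounds [NeZero n] {b : Fin n → ℝ} {α : ℝ} {xt : Fin d → ℝ} {rt : Fin n → Bool}
    {t : ℕ} {st : ELinState n d} (h : ∀ k, 0 ≤ st.lo k ∧ st.lo k ≤ st.hi k) (k : Fin n) :
    (0 ≤ (pre b α xt rt t st).lo k ∧ (pre b α xt rt t st).lo k ≤ (pre b α xt rt t st).hi k) ∧
      st.lo k ≤ (pre b α xt rt t st).lo k ∧ (pre b α xt rt t st).hi k ≤ st.hi k := by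
  unfold pre
  split
  · by_cases hk : k = desig n t
    · subst hk
      simp only [explore, Function.update_self]
      obtain ⟨a1, a2, a3, a4⟩ := newLoHi_basic (h _).1 (h _).2
      exact ⟨⟨a1, a2⟩, a3, a4⟩
    · simp only [explore, Function.update_of_ne hk]
      exact ⟨h k, le_rfl, le_rfl⟩
  · exact ⟨h k, le_rfl, le_rfl⟩

lemma run_bounds [NeZero n] (α : ℝ) (x : ℕ → Fin d → ℝ) (r : ℕ → Fin n → Bool)
    (β : Fin n → ℝ) (hβ : ∀ k, 0 ≤ β k) :
    ∀ t k, 0 ≤ (elinRun β α x r t).lo k ∧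
      (elinRun β α x r t).lo k ≤ (elinRun β α x r t).hi k := by
  intro t
  induction t with
  | zero => intro k; exact ⟨le_rfl, hβ k⟩
  | succ t ih =>
    intro k
    show 0 ≤ (elinStep β α (x t) (r t) t (elinRun β α x r t)).lo k ∧ _
    rw [elinStep_eq]
    exact (pre_bounds ih k).1

/-- The relation maintained between the run with bid `b` and the run with the
higher bid `b' i = ρ * b i` (while agent `i` is still active in the `b`-run). -/
def Rel (ρ : ℝ) (i : Fin n) (st st' : ELinState n d) : Prop :=
  i ∈ st.act ∧ i ∈ st'.act ∧ st'.act ⊆ st.act ∧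
  st'.A i = st.A i ∧ st'.c i = st.c i ∧
  st'.lo i = ρ * st.lo i ∧ st'.hi i = ρ * st.hi i ∧
  (∀ k, k ≠ i → k ∈ st'.act →
    st'.A k = st.A k ∧ st'.c k = st.c k ∧ st'.lo k = st.lo k ∧ st'.hi k = st.hi k) ∧
  (∀ k ∈ st.act, k ∉ st'.act → st.hi k < ρ * st.lo i)

lemma rel_step [NeZero n] {b b' : Fin n → ℝ} {ρ : ℝ} (hρ : 1 ≤ ρ) {i : Fin n}
    (hbk : ∀ k, k ≠ i → b' k = b k) (hbi : b' i = ρ * b i)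
    {α : ℝ} {xt : Fin d → ℝ} {rt : Fin n → Bool} {t : ℕ}
    {st st' : ELinState n d}
    (hB : ∀ k, 0 ≤ st.lo k ∧ st.lo k ≤ st.hi k)
    (hB' : ∀ k, 0 ≤ st'.lo k ∧ st'.lo k ≤ st'.hi k)
    (hR : Rel ρ i st st')
    (hi : i ∈ (elinStep b α xt rt t st).act) :
    Rel ρ i (elinStep b α xt rt t st) (elinStep b' α xt rt t st') := by
  obtain ⟨hia, hia', hsub, hAi, hci, hloi, hhii, hk, hd⟩ := hR
  have hρ0 : (0:ℝ) < ρ := lt_of_lt_of_le one_pos hρ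
  set j := desig n t with hj
  set p := pre b α xt rt t st with hp
  set p' := pre b' α xt rt t st' with hp'
  -- pre-level relations
  have hpre :
      (p'.A i = p.A i ∧ p'.c i = p.c i ∧ p'.lo i = ρ * p.lo i ∧ p'.hi i = ρ * p.hi i) ∧
      (∀ k, k ≠ i → k ∈ st'.act →
        p'.A k = p.A k ∧ p'.c k = p.c k ∧ p'.lo k = p.lo k ∧ p'.hi k = p.hi k) ∧
      (∀ k ∈ st.act, k ∉ st'.act → p.hi k < ρ * p.lo i) := by
    by_cases hj' : j ∈ st'.act
    · have hjact : j ∈ st.act := hsub hj'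
      have hpe : p = explore b α xt rt j st := by rw [hp, pre, if_pos hjact]
      have hpe' : p' = explore b' α xt rt j st' := by rw [hp', pre, if_pos hj']
      by_cases hji : j = i
      · subst hji
        -- scaling update at i = j
        have hbij : b' j * (gq α xt (rt j) (st'.A j) (st'.c j)).1
            = ρ * (b j * (gq α xt (rt j) (st.A j) (st.c j)).1) := by
          rw [hAi, hci, hbi]; ring
        have hbij2 : b' j * (gq α xt (rt j) (st'.A j) (st'.c j)).2
            = ρ * (b j * (gq α xt (rt j) (st.A j) (st.c j)).2) := by
          rw [hAi, hci, hbi]; ring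
        refine ⟨⟨?_, ?_, ?_, ?_⟩, ?_, ?_⟩
        · rw [hpe, hpe']; simp [explore, hAi]
        · rw [hpe, hpe']; simp [explore, hci]
        · rw [hpe, hpe']
          simp only [explore, Function.update_self]
          rw [hbij, hbij2, hloi, hhii, newLo_scale hρ0]
        · rw [hpe, hpe']
          simp only [explore, Function.update_self]
          rw [hbij, hbij2, hloi, hhii, newHi_scale hρ0]
        · intro k hki hk'
          have hkj : k ≠ j := hki
          rw [hpe, hpe']
          simp only [explore, Function.update_of_ne hkj]
          exact hk k hki hk'
        · intro k hkst hk'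
          have hkj : k ≠ j := fun h => hk' (h ▸ hia')
          rw [hpe]
          simp only [explore, Function.update_of_ne hkj, Function.update_self]
          have h1 := hd k hkst hk'
          have h2 := (newLoHi_basic (gm := b j * (gq α xt (rt j) (st.A j) (st.c j)).1)
            (gp := b j * (gq α xt (rt j) (st.A j) (st.c j)).2) (hB j).1 (hB j).2).2.2.1
          calc st.hi k < ρ * st.lo j := h1
            _ ≤ ρ * newLo (st.lo j) (st.hi j)
                (b j * (gq α xt (rt j) (st.A j) (st.c j)).1)
                (b j * (gq α xt (rt j) (st.A j) (st.c j)).2) := by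
                  exact mul_le_mul_of_nonneg_left h2 hρ0.le
      · -- j ≠ i : identical update at j
        have hbj : b' j = b j := hbk j hji
        have hkj := hk j hji hj'
        refine ⟨⟨?_, ?_, ?_, ?_⟩, ?_, ?_⟩
        · rw [hpe, hpe']
          simp only [explore, Function.update_of_ne (Ne.symm hji)]
          exact hAi
        · rw [hpe, hpe']
          simp only [explore, Function.update_of_ne (Ne.symm hji)]
          exact hci
        · rw [hpe, hpe']
          simp only [explore, Function.update_of_ne (Ne.symm hji)]
          exact hloi
        · rw [hpe, hpe']
          simp only [explore, Function.update_of_ne (Ne.symm hji)]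
          exact hhii
        · intro k hki hk'
          by_cases hkjj : k = j
          · subst hkjj
            rw [hpe, hpe']
            simp only [explore, Function.update_self]
            rw [hbj, hkj.1, hkj.2.1, hkj.2.2.1, hkj.2.2.2]
            exact ⟨rfl, rfl, rfl, rfl⟩
          · rw [hpe, hpe']
            simp only [explore, Function.update_of_ne hkjj]
            exact hk k hki hk'
        · intro k hkst hk'
          have hilo : p.lo i = st.lo i := by
            rw [hpe]; simp only [explore, Function.update_of_ne (Ne.symm hji)]
          rw [hilo]
          by_cases hkjj : k = j
          · subst hkjj
            rw [hpe]
            simp only [explore, Function.update_self]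
            calc newHi (st.lo j) (st.hi j)
                  (b j * (gq α xt (rt j) (st.A j) (st.c j)).1)
                  (b j * (gq α xt (rt j) (st.A j) (st.c j)).2)
                ≤ st.hi j := (newLoHi_basic (hB j).1 (hB j).2).2.2.2
              _ < ρ * st.lo i := hd j hkst hk'
          · rw [hpe]
            simp only [explore, Function.update_of_ne hkjj]
            exact hd k hkst hk'
    · -- j not active in the b'-run
      have hpe' : p' = st' := by rw [hp', pre, if_neg hj']
      by_cases hjact : j ∈ st.act
      · have hji : j ≠ i := fun h => hj' (h ▸ hia')
        have hpe : p = explore b α xt rt j st := by rw [hp, pre, if_pos hjact]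
        refine ⟨⟨?_, ?_, ?_, ?_⟩, ?_, ?_⟩
        · rw [hpe, hpe']
          simp only [explore, Function.update_of_ne (Ne.symm hji)]
          exact hAi
        · rw [hpe, hpe']
          simp only [explore, Function.update_of_ne (Ne.symm hji)]
          exact hci
        · rw [hpe, hpe']
          simp only [explore, Function.update_of_ne (Ne.symm hji)]
          exact hloi
        · rw [hpe, hpe']
          simp only [explore, Function.update_of_ne (Ne.symm hji)]
          exact hhii
        · intro k hki hk'
          have hkjj : k ≠ j := fun h => hj' (h ▸ hk')
          rw [hpe, hpe']
          simp only [explore, Function.update_of_ne hkjj]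
          exact hk k hki hk'
        · intro k hkst hk'
          have hilo : p.lo i = st.lo i := by
            rw [hpe]; simp only [explore, Function.update_of_ne (Ne.symm hji)]
          rw [hilo]
          by_cases hkjj : k = j
          · subst hkjj
            rw [hpe]
            simp only [explore, Function.update_self]
            calc newHi (st.lo j) (st.hi j)
                  (b j * (gq α xt (rt j) (st.A j) (st.c j)).1)
                  (b j * (gq α xt (rt j) (st.A j) (st.c j)).2)
                ≤ st.hi j := (newLoHi_basic (hB j).1 (hB j).2).2.2.2
              _ < ρ * st.lo i := hd j hkst hk'
          · rw [hpe]
            simp only [explore, Function.update_of_ne hkjj]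
            exact hd k hkst hk'
      · have hpe : p = st := by rw [hp, pre, if_neg hjact]
        rw [hpe, hpe']
        exact ⟨⟨hAi, hci, hloi, hhii⟩, hk, hd⟩
  obtain ⟨⟨hpA, hpc, hplo, hphi⟩, hpk, hpd⟩ := hpre
  have hpB : ∀ k, 0 ≤ p.lo k ∧ p.lo k ≤ p.hi k := fun k => (pre_bounds hB k).1
  have hpB' : ∀ k, 0 ≤ p'.lo k ∧ p'.lo k ≤ p'.hi k := fun k => (pre_bounds hB' k).1
  -- the elimination condition for i in the b-run
  obtain ⟨-, hisurv⟩ := mem_step_act.1 hi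
  -- i survives in the b'-run
  have hi' : i ∈ (elinStep b' α xt rt t st').act := by
    rw [mem_step_act]
    refine ⟨hia', fun m hm => ?_⟩
    by_cases hmi : m = i
    · rw [hmi, hplo, hphi]
      exact mul_le_mul_of_nonneg_left (hpB i).2 hρ0.le
    · rw [(hpk m hmi hm).2.2.1, hphi]
      calc p.lo m ≤ p.hi i := hisurv m (hsub hm)
        _ ≤ ρ * p.hi i := le_mul_of_one_le_left (le_trans (hpB i).1 (hpB i).2) hρ
  refine ⟨hi, hi', ?_, ?_, ?_, ?_, ?_, ?_, ?_⟩
  · -- step'.act ⊆ step.act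
    intro k hk'
    obtain ⟨hk'st, hk'surv⟩ := mem_step_act.1 hk'
    rw [mem_step_act]
    refine ⟨hsub hk'st, fun m hm => ?_⟩
    by_cases hki : k = i
    · subst hki; exact hisurv m hm
    · have hkeq := hpk k hki hk'st
      by_cases hmst' : m ∈ st'.act
      · by_cases hmi : m = i
        · subst hmi
          calc p.lo m ≤ ρ * p.lo m := le_mul_of_one_le_left (hpB m).1 hρ
            _ = p'.lo m := hplo.symm
            _ ≤ p'.hi k := hk'surv m hmst'
            _ = p.hi k := hkeq.2.2.2
        · calc p.lo m = p'.lo m := (hpk m hmi hmst').2.2.1.symm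
            _ ≤ p'.hi k := hk'surv m hmst'
            _ = p.hi k := hkeq.2.2.2
      · calc p.lo m ≤ p.hi m := (hpB m).2
          _ ≤ ρ * p.lo i := (hpd m hm hmst').le
          _ = p'.lo i := hplo.symm
          _ ≤ p'.hi k := hk'surv i hia'
          _ = p.hi k := hkeq.2.2.2
  · rw [elinStep_eq, elinStep_eq]; exact hpA
  · rw [elinStep_eq, elinStep_eq]; exact hpc
  · rw [elinStep_eq, elinStep_eq]; exact hplo
  · rw [elinStep_eq, elinStep_eq]; exact hphi
  · intro k hki hk'
    obtain ⟨hk'st, -⟩ := mem_step_act.1 hk'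
    have := hpk k hki hk'st
    rw [elinStep_eq, elinStep_eq]
    exact this
  · -- eliminated agents
    intro k hkstep hk'step
    obtain ⟨hkst, hksurv⟩ := mem_step_act.1 hkstep
    have hki : k ≠ i := fun h => hk'step (h ▸ hi')
    show (elinStep b α xt rt t st).hi k < ρ * (elinStep b α xt rt t st).lo i
    rw [elinStep_eq]
    show p.hi k < ρ * p.lo i
    by_cases hkst' : k ∈ st'.act
    · have hkeq := hpk k hki hkst'
      have : ¬ (k ∈ st'.act ∧ ∀ m ∈ st'.act, p'.lo m ≤ p'.hi k) := by
        rw [← mem_step_act]; exact hk'step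
      push_neg at this
      obtain ⟨m, hm, hmlt⟩ := this hkst'
      by_cases hmi : m = i
      · subst hmi
        rw [hplo, hkeq.2.2.2] at hmlt
        exact hmlt
      · exfalso
        rw [(hpk m hmi hm).2.2.1, hkeq.2.2.2] at hmlt
        exact absurd (hksurv m (hsub hm)) (not_le.2 hmlt)
    · exact hpd k hkst hkst'

end ELinAux


/-- **Claim 4.** Fix context arrivals, a click realization, and the bids `b_{-i}` of all
agents other than `i`. Let `b = (b_i, b_{-i})` and `b⁺ = (b_i⁺, b_{-i})` with `b_i⁺ > b_i`
(formalized as `b⁺ = Function.update b i biplus` with `b i < biplus`). Then for every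
round `t`, if `i ∈ S_act(b, t)` then `i ∈ S_act(b⁺, t)`: raising one's own bid can only
keep an agent in the active set longer. -/
theorem elinucb_s_higher_bid_stays_active
    {n d : ℕ} [NeZero n] (α : ℝ) (hα : 0 < α)
    (x : ℕ → Fin d → ℝ) (hx : ∀ t j, x t j ∈ Set.Icc (0 : ℝ) 1)
    (r : ℕ → Fin n → Bool)
    (b : Fin n → ℝ) (hb : ∀ j, b j ∈ Set.Ioc (0 : ℝ) 1)
    (i : Fin n) (biplus : ℝ) (hbp : biplus ∈ Set.Ioc (0 : ℝ) 1)
    (hgt : b i < biplus) :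
    ∀ t : ℕ, i ∈ (elinRun b α x r t).act →
      i ∈ (elinRun (Function.update b i biplus) α x r t).act := by
  classical
  have hbi0 : (0:ℝ) < b i := (hb i).1
  set b' := Function.update b i biplus with hb'def
  set ρ := biplus / b i with hρdef
  have hρ : 1 ≤ ρ := le_of_lt ((one_lt_div hbi0).2 hgt)
  have hbk : ∀ k, k ≠ i → b' k = b k := fun k hk => Function.update_of_ne hk _ _
  have hbi : b' i = ρ * b i := by
    rw [hb'def, Function.update_self, hρdef, div_mul_cancel₀ _ (ne_of_gt hbi0)]
  have hβ : ∀ k, 0 ≤ b k := fun k => (hb k).1.le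
  have hβ' : ∀ k, 0 ≤ b' k := by
    intro k
    by_cases hk : k = i
    · subst hk; rw [hb'def, Function.update_self]; exact hbp.1.le
    · rw [hb'def, Function.update_of_ne hk]; exact (hb k).1.le
  have key : ∀ t, i ∈ (elinRun b α x r t).act →
      ELinAux.Rel ρ i (elinRun b α x r t) (elinRun b' α x r t) := by
    intro t
    induction t with
    | zero =>
      intro _
      refine ⟨Finset.mem_univ i, Finset.mem_univ i, fun k _ => Finset.mem_univ k,
        rfl, rfl, (mul_zero ρ).symm, hbi, ?_, ?_⟩
      · intro k hk _; exact ⟨rfl, rfl, rfl, hbk k hk⟩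
      · intro k _ hk; exact absurd (Finset.mem_univ k) hk
    | succ t ih =>
      intro h
      have h2 : i ∈ (elinStep b α (x t) (r t) t (elinRun b α x r t)).act := h
      have hmem : i ∈ (elinRun b α x r t).act := (ELinAux.mem_step_act.1 h2).1
      exact ELinAux.rel_step hρ hbk hbi (ELinAux.run_bounds α x r b hβ t)
        (ELinAux.run_bounds α x r b' hβ' t) (ih hmem) h2
  intro t h
  exact (key t h).2.1
end

section
/- Let A be an ex-post monotone allocation rule. Applying the self-resampling transformation with parameter δ ∈ (0,1) to A — i.e., running A on the modified bids y_i = η_i b_i and charging the payments p_{i,t} = b_i·1{I_t = i} if η_i = 1 and p_{i,t} = b_i·1{I_t = i}·(1 − 1/δ) if η_i < 1 — yields a mechanism M that is ex-post incentive compatible (EPIC) and ex-post individually rational (EPIR). -/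
/-!
The self-resampling transformation of Babaioff et al.: applied to an ex-post
monotone allocation rule it yields an ex-post incentive compatible (EPIC) and
ex-post individually rational (EPIR) mechanism.

The mechanism's internal randomness is a tuple `ω : Fin n → ℝ × ℝ` of independent
pairs, each coordinate uniform on `[0,1]`: `(ω i).1` is the "coin" deciding whether
agent `i`'s bid is modified (probability `δ`), and `(ω i).2` is the sample `ε_i`
used to produce `η_i = ε_i^{1/(1-δ)}`.
-/

open MeasureTheory Matrix
open scoped Classical

/-- The distribution of the mechanism's internal randomness: for each agent an
independent pair of independent uniform-`[0,1]` random variables. -/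
noncomputable def resampMeasure (n : ℕ) : Measure (Fin n → ℝ × ℝ) :=
  Measure.pi fun _ =>
    (volume.restrict (Set.Icc (0 : ℝ) 1)).prod (volume.restrict (Set.Icc (0 : ℝ) 1))

/-- The multipliers `η_i` of the self-resampling procedure with parameter `δ`:
`η_i = 1` with probability `1 - δ`, and otherwise `η_i = ε_i^{1/(1-δ)}` with `ε_i`
uniform on `[0,1]`. -/
noncomputable def etaOf {n : ℕ} (δ : ℝ) (ω : Fin n → ℝ × ℝ) (i : Fin n) : ℝ :=
  if (ω i).1 ≤ 1 - δ then 1 else ((ω i).2) ^ ((1 : ℝ) / (1 - δ))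

/-- The (realized) utility of agent `i` with true per-click value `vi` at round `t`,
when the reported bid vector is `bid`, the clicks realization is `ρ`, and the
mechanism runs the allocation rule `Alloc` on the modified bids `y_k = η_k · bid_k`,
charging `p_{i,t} = bid_i · 1{I_t = i}` if `η_i = 1` and
`p_{i,t} = bid_i · 1{I_t = i} · (1 - 1/δ)` if `η_i < 1`. -/
noncomputable def mechUtil {n : ℕ}
    (Alloc : (Fin n → ℝ) → ℕ → Fin n) (ρ : ℕ → Fin n → Bool) (δ : ℝ)
    (bid : Fin n → ℝ) (i : Fin n) (vi : ℝ) (t : ℕ) (ω : Fin n → ℝ × ℝ) : ℝ :=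
  let η := etaOf δ ω
  let y : Fin n → ℝ := fun k => η k * bid k
  (if Alloc y t = i then (1 : ℝ) else 0) * (if ρ t i then (1 : ℝ) else 0) *
    (vi - bid i * (if Alloc y t = i then (1 : ℝ) else 0) *
      (if η i = 1 then 1 else 1 - 1 / δ))


open Set


lemma L_upper {M : ℝ → ℝ} (hM : MonotoneOn M (Icc (0:ℝ) 1)) {x C : ℝ}
    (hx : 0 ≤ x) (hxC : x ≤ C) (hC : C ≤ 1) :
    ∫ u in (0:ℝ)..x, M u ≤ M C * x := by
  have hint : IntervalIntegrable M volume 0 x :=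
    (hM.mono (by rw [uIcc_of_le hx]; exact Icc_subset_Icc le_rfl (hxC.trans hC))).intervalIntegrable
  have h2 : ∫ _u in (0:ℝ)..x, M C = M C * x := by simp [mul_comm]
  rw [← h2]
  refine intervalIntegral.integral_mono_on hx hint intervalIntegrable_const ?_
  intro u hu
  exact hM ⟨hu.1, (hu.2.trans hxC).trans hC⟩ ⟨hx.trans hxC, hC⟩ (hu.2.trans hxC)

lemma L_lower {M : ℝ → ℝ} (hM : MonotoneOn M (Icc (0:ℝ) 1)) {a b : ℝ}
    (ha : 0 ≤ a) (hab : a ≤ b) (hb : b ≤ 1) :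
    M a * (b - a) ≤ ∫ u in a..b, M u := by
  have hint : IntervalIntegrable M volume a b :=
    (hM.mono (by rw [uIcc_of_le hab]; exact Icc_subset_Icc ha hb)).intervalIntegrable
  have h2 : ∫ _u in a..b, M a = M a * (b - a) := by simp [mul_comm]
  rw [← h2]
  refine intervalIntegral.integral_mono_on hab intervalIntegrable_const hint ?_
  intro u hu
  exact hM ⟨ha, hab.trans hb⟩ ⟨ha.trans hu.1, hu.2.trans hb⟩ hu.1

lemma L_upper' {M : ℝ → ℝ} (hM : MonotoneOn M (Icc (0:ℝ) 1)) {a b : ℝ}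
    (ha : 0 ≤ a) (hab : a ≤ b) (hb : b ≤ 1) :
    ∫ u in a..b, M u ≤ M b * (b - a) := by
  have hint : IntervalIntegrable M volume a b :=
    (hM.mono (by rw [uIcc_of_le hab]; exact Icc_subset_Icc ha hb)).intervalIntegrable
  have h2 : ∫ _u in a..b, M b = M b * (b - a) := by simp [mul_comm]
  rw [← h2]
  refine intervalIntegral.integral_mono_on hab hint intervalIntegrable_const ?_
  intro u hu
  exact hM ⟨ha.trans hu.1, hu.2.trans hb⟩ ⟨ha.trans hab, hb⟩ hu.2

/-- The core Myerson-type inequality for the self-resampling transformation. -/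
lemma core_ineq {δ v b : ℝ} (hδ0 : 0 < δ) (hδ1 : δ < 1) (hv0 : 0 ≤ v) (hv1 : v ≤ 1)
    (hb0 : 0 < b) (hb1 : b ≤ 1) {M : ℝ → ℝ} (hM : MonotoneOn M (Icc (0:ℝ) 1))
    (hM0 : 0 ≤ M 0) :
    (1-δ) * (M (b ^ (1-δ)) * (v - b)) +
      (δ*v + (1-δ)*b) * ((b ^ (1-δ))⁻¹ * ∫ u in (0:ℝ)..(b ^ (1-δ)), M u)
    ≤ (1-δ) * (M (v ^ (1-δ)) * (v - v)) +
      (δ*v + (1-δ)*v) * ((v ^ (1-δ))⁻¹ * ∫ u in (0:ℝ)..(v ^ (1-δ)), M u) := by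
  have h1δ : (0:ℝ) < 1 - δ := by linarith
  set β := b ^ (1-δ) with hβdef
  set ν := v ^ (1-δ) with hνdef
  have hβ0 : 0 < β := Real.rpow_pos_of_pos hb0 _
  have hβ1 : β ≤ 1 := Real.rpow_le_one hb0.le hb1 h1δ.le
  have hν0 : 0 ≤ ν := Real.rpow_nonneg hv0 _
  have hν1 : ν ≤ 1 := Real.rpow_le_one hv0 hv1 h1δ.le
  have hMβ : 0 ≤ M β := le_trans hM0 (hM ⟨le_rfl, zero_le_one⟩ ⟨hβ0.le, hβ1⟩ hβ0.le)
  set Lβ := ∫ u in (0:ℝ)..β, M u with hLβ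
  set Lν := ∫ u in (0:ℝ)..ν, M u with hLν
  have hLβub : Lβ ≤ M β * β := L_upper hM hβ0.le le_rfl hβ1
  set S := δ*v + (1-δ)*b with hS
  have hamgm : v ^ δ * β ≤ S := by
    have := Real.geom_mean_le_arith_mean2_weighted hδ0.le h1δ.le hv0 hb0.le (by ring)
    simpa [hβdef, hS] using this
  have hvδ0 : 0 ≤ v ^ δ := Real.rpow_nonneg hv0 _
  have hvν : v ^ δ * ν = v := by
    rw [hνdef, ← Real.rpow_add' hv0 (by norm_num), show δ + (1-δ) = (1:ℝ) by ring,
      Real.rpow_one]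
  have hgoalr : (1-δ) * (M ν * (v - v)) + (δ*v + (1-δ)*v) * (ν⁻¹ * Lν)
      = v * ν⁻¹ * Lν := by ring
  rw [hgoalr]
  have hβLβ : β * (S * (β⁻¹ * Lβ)) = S * Lβ := by field_simp
  have hS0 : 0 ≤ S := by rw [hS]; nlinarith
  rcases eq_or_lt_of_le hv0 with hv0' | hvpos
  · -- v = 0
    have hv : v = 0 := hv0'.symm
    subst hv
    rw [← mul_le_mul_iff_of_pos_left hβ0]
    nlinarith [hβLβ, mul_le_mul_of_nonneg_left hLβub hS0, hMβ, hβ0, hb0, hS]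
  · have hνpos : 0 < ν := Real.rpow_pos_of_pos hvpos _
    have hkey : v * ν⁻¹ = v ^ δ := by
      nth_rewrite 1 [← hvν]
      rw [mul_assoc, mul_inv_cancel₀ (ne_of_gt hνpos), mul_one]
    rw [hkey]
    rw [← mul_le_mul_iff_of_pos_left hβ0]
    rcases le_total b v with hbv | hvb
    · -- b ≤ v, β ≤ ν
      have hβν : β ≤ ν := Real.rpow_le_rpow hb0.le hbv h1δ.le
      have hintβ : IntervalIntegrable M volume 0 β :=
        (hM.mono (by rw [uIcc_of_le hβ0.le]; exact Icc_subset_Icc le_rfl hβ1)).intervalIntegrable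
      have hintβν : IntervalIntegrable M volume β ν :=
        (hM.mono (by rw [uIcc_of_le hβν]; exact Icc_subset_Icc hβ0.le hν1)).intervalIntegrable
      have hsplit : Lβ + ∫ u in β..ν, M u = Lν :=
        intervalIntegral.integral_add_adjacent_intervals hintβ hintβν
      have hIlow : M β * (ν - β) ≤ ∫ u in β..ν, M u := L_lower hM hβ0.le hβν hν1
      set I := ∫ u in β..ν, M u with hI
      have hintA : (S - v^δ*β) * Lβ ≤ (S - v^δ*β) * (M β * β) :=
        mul_le_mul_of_nonneg_left hLβub (by linarith)
      have hintB : (v^δ*β) * (M β * (ν - β)) ≤ (v^δ*β) * I :=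
        mul_le_mul_of_nonneg_left hIlow (by positivity)
      have h9 : M β * β * (v^δ * ν) = M β * β * v := by rw [hvν]
      have e1 : β * ((1-δ) * (M β * (v - b)) + S * (β⁻¹ * Lβ))
          = (1-δ)*(M β)*(v-b)*β + S*Lβ := by linear_combination hβLβ
      have e2 : β * (v^δ * Lν) = v^δ*β*Lβ + v^δ*β*I := by
        rw [← hsplit]; ring
      have hzero : (1-δ)*(M β)*(v-b)*β + (S - v^δ*β)*(M β*β) - v^δ*β*(M β*(ν-β)) = 0 := by
        linear_combination (M β * β) * hS - h9
      clear_value β ν Lβ Lν S I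
      linarith [e1, e2, hintA, hintB, hzero]
    · -- v ≤ b, ν ≤ β
      have hνβ : ν ≤ β := Real.rpow_le_rpow hv0 hvb h1δ.le
      have hintν : IntervalIntegrable M volume 0 ν :=
        (hM.mono (by rw [uIcc_of_le hν0]; exact Icc_subset_Icc le_rfl hν1)).intervalIntegrable
      have hintνβ : IntervalIntegrable M volume ν β :=
        (hM.mono (by rw [uIcc_of_le hνβ]; exact Icc_subset_Icc hν0 hβ1)).intervalIntegrable
      have hsplit : Lν + ∫ u in ν..β, M u = Lβ :=
        intervalIntegral.integral_add_adjacent_intervals hintν hintνβ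
      have hIup : ∫ u in ν..β, M u ≤ M β * (β - ν) := L_upper' hM hν0 hνβ hβ1
      have hLνub : Lν ≤ M β * ν := L_upper hM hν0 hνβ hβ1
      set I := ∫ u in ν..β, M u with hI
      have hintA : S * I ≤ S * (M β * (β - ν)) :=
        mul_le_mul_of_nonneg_left hIup hS0
      have hintB : (S - v^δ*β) * Lν ≤ (S - v^δ*β) * (M β * ν) :=
        mul_le_mul_of_nonneg_left hLνub (by linarith)
      have h9 : M β * β * (v^δ * ν) = M β * β * v := by rw [hvν]
      have e1 : β * ((1-δ) * (M β * (v - b)) + S * (β⁻¹ * Lβ))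
          = (1-δ)*(M β)*(v-b)*β + S*Lβ := by linear_combination hβLβ
      have eS : S*Lβ = S*Lν + S*I := by rw [← hsplit]; ring
      have hzero : (1-δ)*(M β)*(v-b)*β + S*(M β*(β-ν)) + (S - v^δ*β)*(M β*ν) = 0 := by
        linear_combination (M β * β) * hS - h9
      clear_value β ν Lβ Lν S I
      linarith [e1, hintA, hintB, hzero, eS]


noncomputable abbrev mu0 : Measure ℝ := volume.restrict (Set.Icc (0:ℝ) 1)

instance mu0_prob : IsProbabilityMeasure mu0 := by
  constructor; simp [Real.volume_Icc]

lemma ae_mem_mu0 : ∀ᵐ e ∂mu0, e ∈ Set.Icc (0:ℝ) 1 :=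
  ae_restrict_mem measurableSet_Icc

/-- change of variables for the resampled part -/
lemma H_eq {δ c : ℝ} (hδ1 : δ < 1) (N : ℝ → ℝ) (hc : 0 < c) :
    ∫ e in Set.Icc (0:ℝ) 1, N (e ^ ((1:ℝ)/(1-δ)) * c)
      = (c ^ (1-δ))⁻¹ * ∫ u in (0:ℝ)..(c ^ (1-δ)), N (u ^ ((1:ℝ)/(1-δ))) := by
  have h1δ : (0:ℝ) < 1 - δ := by linarith
  set γ := c ^ (1-δ) with hγ
  have hγ0 : 0 < γ := Real.rpow_pos_of_pos hc _
  have h1 : ∫ e in Set.Icc (0:ℝ) 1, N (e ^ ((1:ℝ)/(1-δ)) * c)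
      = ∫ e in (0:ℝ)..1, N (e ^ ((1:ℝ)/(1-δ)) * c) := by
    rw [integral_Icc_eq_integral_Ioc, intervalIntegral.integral_of_le zero_le_one]
  rw [h1]
  have h2 : ∫ e in (0:ℝ)..1, N (e ^ ((1:ℝ)/(1-δ)) * c)
      = ∫ e in (0:ℝ)..1, (fun u => N (u ^ ((1:ℝ)/(1-δ)))) (e * γ) := by
    refine intervalIntegral.integral_congr fun e he => ?_
    rw [Set.uIcc_of_le zero_le_one] at he
    simp only
    congr 1
    rw [Real.mul_rpow he.1 (Real.rpow_nonneg hc.le _), one_div,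
      Real.rpow_rpow_inv hc.le (ne_of_gt h1δ)]
  rw [h2, intervalIntegral.integral_comp_mul_right (fun u => N (u ^ ((1:ℝ)/(1-δ)))) (ne_of_gt hγ0)]
  simp [smul_eq_mul]

lemma measure_mu0_Iic {r : ℝ} (hr0 : 0 ≤ r) (hr1 : r ≤ 1) :
    (mu0 (Set.Iic r)).toReal = r := by
  rw [Measure.restrict_apply measurableSet_Iic]
  have : Set.Iic r ∩ Set.Icc 0 1 = Set.Icc 0 r := by
    ext z; simp only [Set.mem_inter_iff, Set.mem_Iic, Set.mem_Icc]
    constructor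
    · rintro ⟨h1, h2, h3⟩; exact ⟨h2, h1⟩
    · rintro ⟨h1, h2⟩; exact ⟨h2, h1, h2.trans hr1⟩
  rw [this, Real.volume_Icc, ENNReal.toReal_ofReal (by linarith)]
  ring

lemma ae_ne_one_mu0 : ∀ᵐ e ∂mu0, e ≠ (1:ℝ) := by
  rw [ae_iff]
  have h : {e : ℝ | ¬ e ≠ 1} = {(1:ℝ)} := by ext z; simp [not_not]
  rw [h, Measure.restrict_apply (measurableSet_singleton 1)]
  exact measure_mono_null Set.inter_subset_left (measure_singleton 1)

lemma inner_eval {δ : ℝ} (hδ0 : 0 < δ) (hδ1 : δ < 1) (N : ℝ → ℝ) (hN : Monotone N)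
    {c : ℝ} (vi : ℝ) (hc0 : 0 ≤ c) (hc1 : c ≤ 1) :
    ∫ p : ℝ × ℝ, (N ((if p.1 ≤ 1-δ then (1:ℝ) else p.2 ^ ((1:ℝ)/(1-δ))) * c) *
        (vi - c * (if (if p.1 ≤ 1-δ then (1:ℝ) else p.2 ^ ((1:ℝ)/(1-δ))) = 1 then 1 else 1 - 1/δ)))
      ∂(mu0.prod mu0)
    = (1-δ) * (N c * (vi - c)) +
        (δ*vi + (1-δ)*c) * ∫ e in Set.Icc (0:ℝ) 1, N (e ^ ((1:ℝ)/(1-δ)) * c) := by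
  have h1δ : (0:ℝ) < 1 - δ := by linarith
  have hq0 : (0:ℝ) ≤ 1/(1-δ) := by positivity
  set q : ℝ := 1/(1-δ) with hq
  set K₁ : ℝ := N c * (vi - c) with hK₁
  set g' : ℝ → ℝ := fun e => N (e ^ q * c) * (vi - c * (if e ^ q = 1 then 1 else 1 - 1/δ))
    with hg'
  set C : ℝ → ℝ := fun _ => K₁ with hC
  set F₁ : ℝ → ℝ := fun a => if a ≤ 1-δ then (1:ℝ) else 0 with hF₁
  set F₂ : ℝ → ℝ := fun a => if a ≤ 1-δ then (0:ℝ) else 1 with hF₂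
  -- rewrite the integrand
  have hfe : (fun p : ℝ × ℝ => N ((if p.1 ≤ 1-δ then (1:ℝ) else p.2 ^ q) * c) *
        (vi - c * (if (if p.1 ≤ 1-δ then (1:ℝ) else p.2 ^ q) = 1 then 1 else 1 - 1/δ)))
      = fun p : ℝ × ℝ => F₁ p.1 * C p.2 + F₂ p.1 * g' p.2 := by
    funext p
    by_cases h : p.1 ≤ 1-δ <;> simp [hF₁, hF₂, hK₁, hg', hC, h]
  -- integrability
  have hintF₁ : Integrable F₁ mu0 := by
    have : F₁ = (Set.Iic (1-δ)).indicator (fun _ => (1:ℝ)) := by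
      funext a; simp [hF₁, Set.indicator_apply]
    rw [this]
    exact (integrable_const 1).indicator measurableSet_Iic
  have hintF₂ : Integrable F₂ mu0 := by
    have : F₂ = fun a => 1 - F₁ a := by
      funext a; by_cases h : a ≤ 1-δ <;> simp [hF₁, hF₂, h]
    rw [this]
    exact (integrable_const 1).sub hintF₁
  have hNmeas : Measurable N := hN.measurable
  have hrpow : Measurable fun e : ℝ => e ^ q := (Real.continuous_rpow_const hq0).measurable
  have hg'meas : Measurable g' := by
    refine ((hNmeas.comp (hrpow.mul_const c)).mul ?_)
    refine Measurable.sub measurable_const ?_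
    exact (measurable_const.mul (Measurable.ite (hrpow (measurableSet_singleton 1))
      measurable_const measurable_const))
  have hg'bdd : ∀ᵐ e ∂mu0, ‖g' e‖ ≤ (|N 0| + |N 1|) * (|vi| + |c| * (1 + |1 - 1/δ|)) := by
    refine ae_mem_mu0.mono fun e he => ?_
    have harg0 : 0 ≤ e ^ q * c := mul_nonneg (Real.rpow_nonneg he.1 _) hc0
    have harg1 : e ^ q * c ≤ 1 := by
      have h1 : e ^ q ≤ 1 := Real.rpow_le_one he.1 he.2 hq0
      nlinarith [Real.rpow_nonneg he.1 q]
    have hNlow : N 0 ≤ N (e ^ q * c) := hN harg0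
    have hNhigh : N (e ^ q * c) ≤ N 1 := hN harg1
    have hNabs : |N (e ^ q * c)| ≤ |N 0| + |N 1| := by
      rw [abs_le]
      constructor
      · linarith [neg_abs_le (N 0), abs_nonneg (N 1)]
      · linarith [le_abs_self (N 1), abs_nonneg (N 0)]
    have hpf : |(if e ^ q = 1 then (1:ℝ) else 1 - 1/δ)| ≤ 1 + |1 - 1/δ| := by
      by_cases h : e ^ q = 1 <;> simp [h] <;> positivity
    have hsnd : |vi - c * (if e ^ q = 1 then (1:ℝ) else 1 - 1/δ)| ≤ |vi| + |c| * (1 + |1 - 1/δ|) := by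
      calc |vi - c * _| ≤ |vi| + |c * _| := abs_sub _ _
        _ = |vi| + |c| * |(if e ^ q = 1 then (1:ℝ) else 1 - 1/δ)| := by rw [abs_mul]
        _ ≤ |vi| + |c| * (1 + |1 - 1/δ|) := by
            gcongr
    rw [hg', Real.norm_eq_abs, abs_mul]
    exact mul_le_mul hNabs hsnd (abs_nonneg _) (by positivity)
  have hintg' : Integrable g' mu0 :=
    ⟨hg'meas.aestronglyMeasurable, HasFiniteIntegral.of_bounded hg'bdd⟩
  have hint1 : Integrable (fun p : ℝ × ℝ => F₁ p.1 * C p.2) (mu0.prod mu0) :=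
    hintF₁.mul_prod (by rw [hC]; exact integrable_const K₁)
  have hint2 : Integrable (fun p : ℝ × ℝ => F₂ p.1 * g' p.2) (mu0.prod mu0) :=
    hintF₂.mul_prod hintg'
  rw [hfe, integral_add hint1 hint2, integral_prod_mul, integral_prod_mul]
  -- compute the pieces
  have hF₁int : ∫ a, F₁ a ∂mu0 = 1 - δ := by
    have : F₁ = (Set.Iic (1-δ)).indicator (fun _ => (1:ℝ)) := by
      funext a; simp [hF₁, Set.indicator_apply]
    rw [this, integral_indicator_const (1:ℝ) measurableSet_Iic, smul_eq_mul, mul_one,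
      measureReal_def, measure_mu0_Iic (by linarith) (by linarith)]
  have hF₂int : ∫ a, F₂ a ∂mu0 = δ := by
    have h : F₂ = fun a => 1 - F₁ a := by
      funext a; by_cases h : a ≤ 1-δ <;> simp [hF₁, hF₂, h]
    rw [h, integral_sub (integrable_const 1) hintF₁, hF₁int, integral_const]
    simp
  have hconst : ∫ a, C a ∂mu0 = K₁ := by rw [hC]; simp
  -- g' a.e. equals the version without the ite
  have hg'int : ∫ e, g' e ∂mu0 = (∫ e in Set.Icc (0:ℝ) 1, N (e ^ q * c)) * (vi - c * (1 - 1/δ)) := by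
    have hae : g' =ᵐ[mu0] fun e => N (e ^ q * c) * (vi - c * (1 - 1/δ)) := by
      filter_upwards [ae_mem_mu0, ae_ne_one_mu0] with e he hne
      have : ¬ (e ^ q = 1) := by
        intro h
        rcases lt_or_eq_of_le he.2 with h2 | h2
        · have hlt : e ^ q < 1 := Real.rpow_lt_one he.1 h2 (by rw [hq]; positivity)
          rw [h] at hlt; exact absurd hlt (lt_irrefl 1)
        · exact hne h2
      simp [hg', this]
    rw [integral_congr_ae hae, integral_mul_const]
  rw [hF₁int, hF₂int, hconst, hg'int]
  have hδne : δ ≠ 0 := ne_of_gt hδ0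
  generalize (∫ e in Set.Icc (0:ℝ) 1, N (e ^ q * c)) = J
  field_simp
  ring

lemma Hint {δ : ℝ} (hδ1 : δ < 1) (N : ℝ → ℝ) (hN : Monotone N)
    {c : ℝ} (hc0 : 0 ≤ c) (hc1 : c ≤ 1) :
    Integrable (fun e => N (e ^ ((1:ℝ)/(1-δ)) * c)) mu0 := by
  have h1δ : (0:ℝ) < 1 - δ := by linarith
  have hq0 : (0:ℝ) ≤ 1/(1-δ) := by positivity
  refine ⟨((hN.measurable.comp ((Real.continuous_rpow_const hq0).measurable.mul_const c))).aestronglyMeasurable,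
    HasFiniteIntegral.of_bounded (C := |N 0| + |N 1|) ?_⟩
  refine ae_mem_mu0.mono fun e he => ?_
  have harg0 : 0 ≤ e ^ ((1:ℝ)/(1-δ)) * c := mul_nonneg (Real.rpow_nonneg he.1 _) hc0
  have harg1 : e ^ ((1:ℝ)/(1-δ)) * c ≤ 1 := by
    have h1 : e ^ ((1:ℝ)/(1-δ)) ≤ 1 := Real.rpow_le_one he.1 he.2 hq0
    nlinarith [Real.rpow_nonneg he.1 ((1:ℝ)/(1-δ))]
  have hNlow : N 0 ≤ N _ := hN harg0
  have hNhigh : N _ ≤ N 1 := hN harg1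
  rw [Real.norm_eq_abs, abs_le]
  constructor
  · linarith [neg_abs_le (N 0), abs_nonneg (N 1)]
  · linarith [le_abs_self (N 1), abs_nonneg (N 0)]

/-- the key one-agent inequality : expected utility of bidding `c` is at most
that of bidding `vi` (truthful). -/
lemma inner_le {δ vi : ℝ} (hδ0 : 0 < δ) (hδ1 : δ < 1) (N : ℝ → ℝ) (hN : Monotone N)
    (hN0 : 0 ≤ N 0) {c : ℝ} (hc0 : 0 ≤ c) (hc1 : c ≤ 1) (hvi0 : 0 ≤ vi) (hvi1 : vi ≤ 1) :
    ∫ p : ℝ × ℝ, (N ((if p.1 ≤ 1-δ then (1:ℝ) else p.2 ^ ((1:ℝ)/(1-δ))) * c) *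
        (vi - c * (if (if p.1 ≤ 1-δ then (1:ℝ) else p.2 ^ ((1:ℝ)/(1-δ))) = 1 then 1 else 1 - 1/δ)))
      ∂(mu0.prod mu0)
    ≤ ∫ p : ℝ × ℝ, (N ((if p.1 ≤ 1-δ then (1:ℝ) else p.2 ^ ((1:ℝ)/(1-δ))) * vi) *
        (vi - vi * (if (if p.1 ≤ 1-δ then (1:ℝ) else p.2 ^ ((1:ℝ)/(1-δ))) = 1 then 1 else 1 - 1/δ)))
      ∂(mu0.prod mu0) := by
  have h1δ : (0:ℝ) < 1 - δ := by linarith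
  have hq0 : (0:ℝ) ≤ 1/(1-δ) := by positivity
  rw [inner_eval hδ0 hδ1 N hN vi hc0 hc1, inner_eval hδ0 hδ1 N hN vi hvi0 hvi1]
  -- pointwise comparisons of H with N values
  have hHle : ∀ {z : ℝ}, 0 ≤ z → z ≤ 1 →
      (∫ e in Set.Icc (0:ℝ) 1, N (e ^ ((1:ℝ)/(1-δ)) * z)) ≤ N z := by
    intro z hz0 hz1
    have h2 : (∫ e in Set.Icc (0:ℝ) 1, N z) = N z := by
      rw [setIntegral_const]; simp [Real.volume_Icc]
    rw [← h2]
    refine integral_mono_ae (Hint hδ1 N hN hz0 hz1) (integrable_const _) ?_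
    refine ae_mem_mu0.mono fun e he => ?_
    refine hN ?_
    have h1 : e ^ ((1:ℝ)/(1-δ)) ≤ 1 := Real.rpow_le_one he.1 he.2 hq0
    nlinarith [Real.rpow_nonneg he.1 ((1:ℝ)/(1-δ))]
  have hHge : ∀ {z : ℝ}, 0 ≤ z → z ≤ 1 →
      N 0 ≤ ∫ e in Set.Icc (0:ℝ) 1, N (e ^ ((1:ℝ)/(1-δ)) * z) := by
    intro z hz0 hz1
    have h2 : (∫ e in Set.Icc (0:ℝ) 1, N 0) = N 0 := by
      rw [setIntegral_const]; simp [Real.volume_Icc]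
    rw [← h2]
    refine integral_mono_ae (integrable_const _) (Hint hδ1 N hN hz0 hz1) ?_
    refine ae_mem_mu0.mono fun e he => ?_
    exact hN (mul_nonneg (Real.rpow_nonneg he.1 _) hz0)
  rcases eq_or_lt_of_le hc0 with hc0' | hcpos
  · -- c = 0
    have hc : c = 0 := hc0'.symm
    subst hc
    have hH0 : (∫ e in Set.Icc (0:ℝ) 1, N (e ^ ((1:ℝ)/(1-δ)) * 0)) = N 0 := by
      simp
    rw [hH0]
    have := hHge hvi0 hvi1
    nlinarith [this, hN0]
  · rcases eq_or_lt_of_le hvi0 with hvi0' | hvipos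
    · -- vi = 0
      have hvi : vi = 0 := hvi0'.symm
      subst hvi
      have := hHle hc0 hc1
      have key := mul_le_mul_of_nonneg_left this (by positivity : (0:ℝ) ≤ (1-δ)*c)
      nlinarith [key]
    · -- both positive : use the core inequality
      rw [H_eq hδ1 N hcpos, H_eq hδ1 N hvipos]
      have hMmono : MonotoneOn (fun u => N (u ^ ((1:ℝ)/(1-δ)))) (Set.Icc (0:ℝ) 1) := by
        intro u hu u' hu' huu'
        exact hN (Real.rpow_le_rpow hu.1 huu' hq0)
      have hM0 : 0 ≤ (fun u => N (u ^ ((1:ℝ)/(1-δ)))) 0 := by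
        show 0 ≤ N ((0:ℝ) ^ ((1:ℝ)/(1-δ)))
        rw [Real.zero_rpow (by positivity : (1:ℝ)/(1-δ) ≠ 0)]
        exact hN0
      have hcore := core_ineq hδ0 hδ1 hvi0 hvi1 hcpos hc1 hMmono hM0
      have hrw : ∀ {z : ℝ}, 0 ≤ z → N ((z ^ (1-δ)) ^ ((1:ℝ)/(1-δ))) = N z := by
        intro z hz
        rw [one_div, Real.rpow_rpow_inv hz (ne_of_gt h1δ)]
      rw [hrw hc0, hrw hvi0] at hcore
      exact hcore

/-! ### Glue : mechanism utilities, measurability, and the product structure -/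

noncomputable def etaVal (δ : ℝ) (p : ℝ × ℝ) : ℝ :=
  if p.1 ≤ 1 - δ then 1 else p.2 ^ ((1:ℝ)/(1-δ))

lemma etaOf_apply {n : ℕ} (δ : ℝ) (ω : Fin n → ℝ × ℝ) (k : Fin n) :
    etaOf δ ω k = etaVal δ (ω k) := rfl

lemma etaVal_measurable {δ : ℝ} (hδ1 : δ < 1) : Measurable (etaVal δ) := by
  have h1δ : (0:ℝ) < 1 - δ := by linarith
  have hq0 : (0:ℝ) ≤ 1/(1-δ) := by positivity
  unfold etaVal
  exact Measurable.ite (measurableSet_le measurable_fst measurable_const) measurable_const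
    ((Real.continuous_rpow_const hq0).measurable.comp measurable_snd)

lemma sum_mechUtil {n : ℕ} (Alloc : (Fin n → ℝ) → ℕ → Fin n) (ρ : ℕ → Fin n → Bool)
    (δ : ℝ) (bid : Fin n → ℝ) (i : Fin n) (vi : ℝ) (T : ℕ) (ω : Fin n → ℝ × ℝ) :
    ∑ t ∈ Finset.range T, mechUtil Alloc ρ δ bid i vi t ω
      = ((((Finset.range T).filter
            (fun s => Alloc (fun k => etaOf δ ω k * bid k) s = i ∧ ρ s i = true)).card : ℝ))
        * (vi - bid i * (if etaOf δ ω i = 1 then 1 else 1 - 1/δ)) := by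
  have h : ∀ t, mechUtil Alloc ρ δ bid i vi t ω
      = if (Alloc (fun k => etaOf δ ω k * bid k) t = i ∧ ρ t i = true) then
          (vi - bid i * (if etaOf δ ω i = 1 then 1 else 1 - 1/δ)) else 0 := by
    intro t
    simp only [mechUtil]
    by_cases h1 : Alloc (fun k => etaOf δ ω k * bid k) t = i
    · by_cases h2 : ρ t i <;> simp [h1, h2]
    · simp [h1]
  rw [Finset.sum_congr rfl (fun t _ => h t), ← Finset.sum_filter, Finset.sum_const,
    nsmul_eq_mul]

lemma mechUtil_measurable {n : ℕ} {Alloc : (Fin n → ℝ) → ℕ → Fin n}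
    (hmeas : ∀ t, Measurable fun bid => Alloc bid t) (ρ : ℕ → Fin n → Bool)
    {δ : ℝ} (hδ1 : δ < 1) (bid : Fin n → ℝ) (i : Fin n) (vi : ℝ) (t : ℕ) :
    Measurable (mechUtil Alloc ρ δ bid i vi t) := by
  have hy : Measurable fun ω : Fin n → ℝ × ℝ => (fun k => etaOf δ ω k * bid k) :=
    measurable_pi_lambda _ fun k =>
      ((etaVal_measurable hδ1).comp (measurable_pi_apply k)).mul_const (bid k)
  have hsetA : MeasurableSet {ω : Fin n → ℝ × ℝ | Alloc (fun k => etaOf δ ω k * bid k) t = i} :=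
    ((hmeas t).comp hy) (measurableSet_singleton i)
  have hseteta : MeasurableSet {ω : Fin n → ℝ × ℝ | etaOf δ ω i = 1} :=
    ((etaVal_measurable hδ1).comp (measurable_pi_apply i)) (measurableSet_singleton 1)
  show Measurable fun ω : Fin n → ℝ × ℝ =>
    (if Alloc (fun k => etaOf δ ω k * bid k) t = i then (1:ℝ) else 0) *
      (if ρ t i then (1:ℝ) else 0) *
      (vi - bid i * (if Alloc (fun k => etaOf δ ω k * bid k) t = i then (1:ℝ) else 0) *
        (if etaOf δ ω i = 1 then 1 else 1 - 1/δ))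
  refine Measurable.mul (Measurable.mul ?_ measurable_const) ?_
  · exact Measurable.ite hsetA measurable_const measurable_const
  · refine Measurable.sub measurable_const ?_
    refine Measurable.mul (Measurable.mul measurable_const ?_) ?_
    · exact Measurable.ite hsetA measurable_const measurable_const
    · exact Measurable.ite hseteta measurable_const measurable_const

lemma mechUtil_abs_le {n : ℕ} (Alloc : (Fin n → ℝ) → ℕ → Fin n) (ρ : ℕ → Fin n → Bool)
    (δ : ℝ) (bid : Fin n → ℝ) (i : Fin n) (vi : ℝ) (t : ℕ) (ω : Fin n → ℝ × ℝ) :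
    |mechUtil Alloc ρ δ bid i vi t ω| ≤ |vi| + |bid i| * (1 + |1 - 1/δ|) := by
  have hRHS : 0 ≤ |vi| + |bid i| * (1 + |1 - 1/δ|) := by positivity
  simp only [mechUtil]
  by_cases h1 : Alloc (fun k => etaOf δ ω k * bid k) t = i
  · by_cases h2 : ρ t i
    · by_cases h3 : etaOf δ ω i = 1
      · simp only [h1, h2, h3, if_true]
        calc |1 * 1 * (vi - bid i * 1 * 1)| = |vi - bid i| := by norm_num
          _ ≤ |vi| + |bid i| := abs_sub _ _
          _ ≤ _ := by nlinarith [abs_nonneg (bid i), abs_nonneg (1 - 1/δ)]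
      · simp only [h1, h2, h3, if_true, if_false]
        calc |1 * 1 * (vi - bid i * 1 * (1 - 1/δ))| = |vi - bid i * (1 - 1/δ)| := by norm_num
          _ ≤ |vi| + |bid i * (1 - 1/δ)| := abs_sub _ _
          _ = |vi| + |bid i| * |1 - 1/δ| := by rw [abs_mul]
          _ ≤ _ := by nlinarith [abs_nonneg (bid i)]
    · simp only [h1, h2, if_true, if_false]
      simpa using hRHS
  · simp only [h1, if_false]
    simpa using hRHS

lemma mechUtil_integrable {n : ℕ} [NeZero n] {Alloc : (Fin n → ℝ) → ℕ → Fin n}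
    (hmeas : ∀ t, Measurable fun bid => Alloc bid t) (ρ : ℕ → Fin n → Bool)
    {δ : ℝ} (hδ1 : δ < 1) (bid : Fin n → ℝ) (i : Fin n) (vi : ℝ) (t : ℕ) :
    Integrable (mechUtil Alloc ρ δ bid i vi t) (resampMeasure n) := by
  have : IsProbabilityMeasure (resampMeasure n) := by
    unfold resampMeasure; infer_instance
  exact ⟨(mechUtil_measurable hmeas ρ hδ1 bid i vi t).aestronglyMeasurable,
    HasFiniteIntegral.of_bounded (ae_of_all _ fun ω => by
      simpa [Real.norm_eq_abs] using mechUtil_abs_le Alloc ρ δ bid i vi t ω)⟩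

/-- splitting off the `i`-th coordinate of the product of pairs -/
noncomputable def phiMap {n : ℕ} (i : Fin n) :
    ((ℝ × ℝ) × ({j : Fin n // ¬ j = i} → ℝ × ℝ)) ≃ᵐ (Fin n → ℝ × ℝ) :=
  (MeasurableEquiv.prodCongr (MeasurableEquiv.funUnique {j : Fin n // j = i} (ℝ × ℝ)).symm
    (MeasurableEquiv.refl _)).trans
    (MeasurableEquiv.piEquivPiSubtypeProd (fun _ : Fin n => ℝ × ℝ) (fun j => j = i)).symm

lemma phiMap_apply {n : ℕ} (i : Fin n) (p : ℝ × ℝ) (w : {j : Fin n // ¬ j = i} → ℝ × ℝ)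
    (k : Fin n) : phiMap i (p, w) k = if h : k = i then p else w ⟨k, h⟩ := by
  simp only [phiMap, MeasurableEquiv.trans_apply, MeasurableEquiv.prodCongr,
    MeasurableEquiv.coe_mk, Equiv.prodCongr_apply, Equiv.coe_fn_mk, Prod.map,
    MeasurableEquiv.refl_apply,
    MeasurableEquiv.piEquivPiSubtypeProd, MeasurableEquiv.symm_mk,
    Equiv.piEquivPiSubtypeProd_symm_apply]
  by_cases h : k = i <;> simp [h, MeasurableEquiv.funUnique, Equiv.funUnique]

lemma phiMap_mp {n : ℕ} (i : Fin n) :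
    MeasurePreserving (phiMap i)
      ((mu0.prod mu0).prod (Measure.pi fun _ : {j : Fin n // ¬ j = i} => mu0.prod mu0))
      (Measure.pi fun _ : Fin n => mu0.prod mu0) := by
  have h1 := MeasurePreserving.symm _
    (MeasureTheory.measurePreserving_piEquivPiSubtypeProd
      (fun _ : Fin n => mu0.prod mu0) (fun j => j = i))
  have h2 := MeasurePreserving.symm _
    (MeasureTheory.measurePreserving_funUnique (mu0.prod mu0) {j : Fin n // j = i})
  have h3 := h2.prod (MeasurePreserving.id
    (Measure.pi fun _ : {j : Fin n // ¬ j = i} => mu0.prod mu0))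
  have hfin : (Unique.fintype : Fintype {j : Fin n // j = i}) =
      Subtype.fintype (fun j => j = i) := Subsingleton.elim _ _
  rw [hfin] at h3
  have h4 := h1.comp h3
  exact h4

/-- **Theorem (Babaioff et al., Theorem 4.5).** Let `A` be an ex-post monotone
allocation rule (for every fixed context-arrival sequence and click realization,
the number of clicks an agent gets in the first `t` rounds is monotone in its own
bid).  Applying the self-resampling transformation with parameter `δ ∈ (0,1)`
yields a mechanism that is EPIC and EPIR: truthful reporting maximizes every
agent's total expected utility for every realization of contexts and clicks, and
under truthful bidding every agent's expected utility at every round is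
non-negative (the expectation being over the mechanism's internal randomization). -/
theorem resampling_of_ex_post_monotone_is_EPIC_EPIR
    {n d : ℕ} [NeZero n] (T : ℕ)
    (Alloc : (ℕ → Fin d → ℝ) → (ℕ → Fin n → Bool) → (Fin n → ℝ) → ℕ → Fin n)
    (hmeas : ∀ (x : ℕ → Fin d → ℝ) (ρ : ℕ → Fin n → Bool) (t : ℕ),
      Measurable fun bid => Alloc x ρ bid t)
    (hmono : ∀ (x : ℕ → Fin d → ℝ) (ρ : ℕ → Fin n → Bool) (bid : Fin n → ℝ)
      (i : Fin n) (v : ℝ) (t : ℕ), bid i ≤ v →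
      ((Finset.range t).filter (fun s => Alloc x ρ bid s = i ∧ ρ s i = true)).card ≤
      ((Finset.range t).filter
        (fun s => Alloc x ρ (Function.update bid i v) s = i ∧ ρ s i = true)).card)
    (δ : ℝ) (hδ : δ ∈ Set.Ioo (0 : ℝ) 1) :
    -- EPIC
    (∀ (x : ℕ → Fin d → ℝ) (ρ : ℕ → Fin n → Bool) (i : Fin n)
        (b : Fin n → ℝ) (vi : ℝ),
        (∀ j, b j ∈ Set.Icc (0 : ℝ) 1) → vi ∈ Set.Icc (0 : ℝ) 1 →
        ∑ t ∈ Finset.range T,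
            ∫ ω, mechUtil (Alloc x ρ) ρ δ (Function.update b i vi) i vi t ω
              ∂(resampMeasure n) ≥
          ∑ t ∈ Finset.range T,
            ∫ ω, mechUtil (Alloc x ρ) ρ δ b i vi t ω ∂(resampMeasure n)) ∧
    -- EPIR
    (∀ (x : ℕ → Fin d → ℝ) (ρ : ℕ → Fin n → Bool) (i : Fin n)
        (b : Fin n → ℝ) (t : ℕ),
        (∀ j, b j ∈ Set.Icc (0 : ℝ) 1) →
        0 ≤ ∫ ω, mechUtil (Alloc x ρ) ρ δ b i (b i) t ω ∂(resampMeasure n)) := by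
    -- EPIC and EPIR
  obtain ⟨hδ0, hδ1⟩ := hδ
  have h1δ : (0:ℝ) < 1 - δ := by linarith
  have hprob : IsProbabilityMeasure (resampMeasure n) := by
    unfold resampMeasure; infer_instance
  constructor
  · -- EPIC
    intro x ρ i b vi hb hvi
    rw [ge_iff_le]
    have hmeasA : ∀ t, Measurable fun bid => Alloc x ρ bid t := fun t => hmeas x ρ t
    set Y : ({j : Fin n // ¬ j = i} → ℝ × ℝ) → (Fin n → ℝ) :=
      fun w k => if h : k = i then 0 else etaVal δ (w ⟨k, h⟩) * b k with hY
    set Nw : ({j : Fin n // ¬ j = i} → ℝ × ℝ) → ℝ → ℝ := fun w z =>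
      (((Finset.range T).filter
        (fun s => Alloc x ρ (Function.update (Y w) i z) s = i ∧ ρ s i = true)).card : ℝ) with hNw
    have hNmono : ∀ w, Monotone (Nw w) := by
      intro w z z' hzz'
      have h := hmono x ρ (Function.update (Y w) i z) i z' T
        (by rw [Function.update_self]; exact hzz')
      rw [Function.update_idem] at h
      simp only [hNw]
      exact_mod_cast h
    have hN0 : ∀ w, 0 ≤ Nw w 0 := by
      intro w; simp only [hNw]; positivity
    have master : ∀ (bid : Fin n → ℝ), (∀ j, j ≠ i → bid j = b j) →
        (∑ t ∈ Finset.range T,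
            ∫ ω, mechUtil (Alloc x ρ) ρ δ bid i vi t ω ∂(resampMeasure n))
          = (∫ w, (∫ p : ℝ × ℝ,
              Nw w ((if p.1 ≤ 1-δ then (1:ℝ) else p.2 ^ ((1:ℝ)/(1-δ))) * bid i) *
                (vi - bid i * (if (if p.1 ≤ 1-δ then (1:ℝ) else p.2 ^ ((1:ℝ)/(1-δ))) = 1
                  then 1 else 1 - 1/δ)) ∂(mu0.prod mu0))
              ∂(Measure.pi fun _ : {j : Fin n // ¬ j = i} => mu0.prod mu0))
        ∧ Integrable (fun w => ∫ p : ℝ × ℝ,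
              Nw w ((if p.1 ≤ 1-δ then (1:ℝ) else p.2 ^ ((1:ℝ)/(1-δ))) * bid i) *
                (vi - bid i * (if (if p.1 ≤ 1-δ then (1:ℝ) else p.2 ^ ((1:ℝ)/(1-δ))) = 1
                  then 1 else 1 - 1/δ)) ∂(mu0.prod mu0))
            (Measure.pi fun _ : {j : Fin n // ¬ j = i} => mu0.prod mu0) := by
      intro bid hbid
      set F : (Fin n → ℝ × ℝ) → ℝ :=
        fun ω => ∑ t ∈ Finset.range T, mechUtil (Alloc x ρ) ρ δ bid i vi t ω with hF
      have hFmeas : Measurable F :=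
        Finset.measurable_sum _ (fun t _ => mechUtil_measurable hmeasA ρ hδ1 bid i vi t)
      have hFbound : ∀ ω, ‖F ω‖ ≤ T * (|vi| + |bid i| * (1 + |1-1/δ|)) := by
        intro ω
        rw [Real.norm_eq_abs, hF]
        calc |∑ t ∈ Finset.range T, mechUtil (Alloc x ρ) ρ δ bid i vi t ω|
            ≤ ∑ t ∈ Finset.range T, |mechUtil (Alloc x ρ) ρ δ bid i vi t ω| :=
              Finset.abs_sum_le_sum_abs _ _
          _ ≤ ∑ _t ∈ Finset.range T, (|vi| + |bid i| * (1 + |1-1/δ|)) :=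
              Finset.sum_le_sum fun t _ => mechUtil_abs_le (Alloc x ρ) ρ δ bid i vi t ω
          _ = T * (|vi| + |bid i| * (1 + |1-1/δ|)) := by
              rw [Finset.sum_const, Finset.card_range, nsmul_eq_mul]
      have hFint : Integrable F (resampMeasure n) :=
        ⟨hFmeas.aestronglyMeasurable, HasFiniteIntegral.of_bounded (ae_of_all _ hFbound)⟩
      have step1 : (∑ t ∈ Finset.range T,
            ∫ ω, mechUtil (Alloc x ρ) ρ δ bid i vi t ω ∂(resampMeasure n))
          = ∫ ω, F ω ∂(resampMeasure n) :=
        (integral_finset_sum _ (fun t _ =>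
          mechUtil_integrable hmeasA ρ hδ1 bid i vi t)).symm
      have hπeq : resampMeasure n = Measure.pi fun _ : Fin n => mu0.prod mu0 := rfl
      have step2 : ∫ ω, F ω ∂(resampMeasure n)
          = ∫ z, F (phiMap i z)
              ∂((mu0.prod mu0).prod
                (Measure.pi fun _ : {j : Fin n // ¬ j = i} => mu0.prod mu0)) := by
        rw [hπeq]
        exact ((phiMap_mp i).integral_comp (phiMap i).measurableEmbedding F).symm
      have hGint : Integrable (fun z => F (phiMap i z))
          ((mu0.prod mu0).prod
            (Measure.pi fun _ : {j : Fin n // ¬ j = i} => mu0.prod mu0)) := by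
        rw [hπeq] at hFint
        exact ((phiMap_mp i).integrable_comp_emb (phiMap i).measurableEmbedding
          (g := F)).mpr hFint
      have step3 : ∫ z, F (phiMap i z)
            ∂((mu0.prod mu0).prod
              (Measure.pi fun _ : {j : Fin n // ¬ j = i} => mu0.prod mu0))
          = ∫ w, ∫ p, F (phiMap i (p, w)) ∂(mu0.prod mu0)
              ∂(Measure.pi fun _ : {j : Fin n // ¬ j = i} => mu0.prod mu0) :=
        integral_prod_symm _ hGint
      have hGeq : ∀ (p : ℝ × ℝ) w, F (phiMap i (p, w))
          = Nw w ((if p.1 ≤ 1-δ then (1:ℝ) else p.2 ^ ((1:ℝ)/(1-δ))) * bid i) *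
              (vi - bid i * (if (if p.1 ≤ 1-δ then (1:ℝ) else p.2 ^ ((1:ℝ)/(1-δ))) = 1
                then 1 else 1 - 1/δ)) := by
        intro p w
        rw [hF]
        simp only
        rw [sum_mechUtil]
        have hyeq : (fun k => etaOf δ (phiMap i (p, w)) k * bid k)
            = Function.update (Y w) i (etaVal δ p * bid i) := by
          funext k
          rw [etaOf_apply, phiMap_apply]
          by_cases h : k = i
          · subst h
            rw [dif_pos rfl, Function.update_self]
          · rw [dif_neg h, Function.update_of_ne h, hY]
            simp only [dif_neg h]
            rw [hbid k h]
        have hieq : etaOf δ (phiMap i (p, w)) i = etaVal δ p := by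
          rw [etaOf_apply, phiMap_apply, dif_pos rfl]
        rw [hyeq, hieq]
        rfl
      have step4 : (fun w => ∫ p, F (phiMap i (p, w)) ∂(mu0.prod mu0))
          = fun w => ∫ p : ℝ × ℝ,
              Nw w ((if p.1 ≤ 1-δ then (1:ℝ) else p.2 ^ ((1:ℝ)/(1-δ))) * bid i) *
                (vi - bid i * (if (if p.1 ≤ 1-δ then (1:ℝ) else p.2 ^ ((1:ℝ)/(1-δ))) = 1
                  then 1 else 1 - 1/δ)) ∂(mu0.prod mu0) := by
        funext w
        congr 1
        funext p
        exact hGeq p w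
      constructor
      · rw [step1, step2, step3, step4]
      · have hOuter := hGint.integral_prod_right
        beta_reduce at hOuter
        have : (fun w => ∫ p, F (phiMap i (p, w)) ∂(mu0.prod mu0)) = fun y =>
            ∫ x, (fun z => F (phiMap i z)) (x, y) ∂(mu0.prod mu0) := rfl
        rw [← this] at hOuter
        rw [step4] at hOuter
        exact hOuter
    obtain ⟨eqb, intb⟩ := master b (fun j _ => rfl)
    obtain ⟨eqv, intv⟩ := master (Function.update b i vi)
      (fun j h => Function.update_of_ne h _ _)
    rw [eqb, eqv]
    simp only [Function.update_self] at intv ⊢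
    refine integral_mono intb intv ?_
    intro w
    exact inner_le hδ0 hδ1 (Nw w) (hNmono w) (hN0 w) (hb i).1 (hb i).2 hvi.1 hvi.2
  · -- EPIR
    intro x ρ i b t hb
    refine integral_nonneg ?_
    intro ω
    have hbi0 : 0 ≤ b i := (hb i).1
    by_cases h1 : Alloc x ρ (fun k => etaOf δ ω k * b k) t = i
    · by_cases h3 : etaOf δ ω i = 1
      · simp only [mechUtil, h1, h3, if_true]
        norm_num
      · by_cases h2 : ρ t i
        · simp only [mechUtil, h1, h3, h2, if_true, if_false]
          have : b i - b i * 1 * (1 - 1/δ) = b i * (1/δ) := by ring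
          rw [one_mul, one_mul, this]
          positivity
        · simp [mechUtil, h1, h2, h3]
    · simp [mechUtil, h1]
end

section
/- Let A be a d×d symmetric positive definite real matrix all of whose eigenvalues are at least 1, let x ∈ R^d with ‖x‖_2 ≤ 1, and let B = A + x x^T. Then the eigenvalues λ_1,…,λ_d of A and ν_1,…,ν_d of B can be arranged so that λ_j ≤ ν_j for all j, and x^T A^{-1} x ≤ 10 Σ_{j=1}^d (ν_j − λ_j)/λ_j. (In the SupLinUCB-S setting: for each stage s and agent i, if Ψ_{i,t+1}^s = Ψ_{i,t}^s ∪ {t}, then the eigenvalues of A_{i,t} and A_{i,t+1} can be arranged so that λ_{i,t}^j ≤ λ_{i,t+1}^j for all j, and s_{i,t}^2 ≤ 10 Σ_{j=1}^d (λ_{i,t+1}^j − λ_{i,t}^j)/λ_{i,t}^j.) -/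
open Matrix

variable {d : ℕ}

lemma quadDiag (U : Matrix (Fin d) (Fin d) ℝ)
    (μ : Fin d → ℝ) (x : Fin d → ℝ) :
    x ⬝ᵥ ((U * diagonal μ * star U) *ᵥ x) = ∑ i, μ i * ((star U *ᵥ x) i) ^ 2 := by
  set c := star U *ᵥ x with hc
  have hvm : vecMul x U = c := by
    rw [hc, star_eq_conjTranspose, ← mulVec_transpose]
    simp [conjTranspose, Matrix.map]
    rfl
  calc x ⬝ᵥ ((U * diagonal μ * star U) *ᵥ x)
      = x ⬝ᵥ (U *ᵥ (diagonal μ *ᵥ c)) := by rw [← mulVec_mulVec, ← mulVec_mulVec]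
    _ = vecMul x U ⬝ᵥ (diagonal μ *ᵥ c) := by rw [dotProduct_mulVec]
    _ = c ⬝ᵥ (diagonal μ *ᵥ c) := by rw [hvm]
    _ = ∑ i, μ i * (c i) ^ 2 := by
        simp [dotProduct, mulVec_diagonal]
        congr 1; funext i; ring

lemma normSq (U : Matrix (Fin d) (Fin d) ℝ) (hU : U * star U = 1) (x : Fin d → ℝ) :
    x ⬝ᵥ x = ∑ i, ((star U *ᵥ x) i) ^ 2 := by
  have := quadDiag U (fun _ => 1) x
  simp only [diagonal_one, Matrix.mul_one, hU, one_mulVec, one_mul] at this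
  exact this

noncomputable def colSpan (U : Matrix (Fin d) (Fin d) ℝ) (s : Finset (Fin d)) :
    Submodule ℝ (Fin d → ℝ) :=
  Submodule.span ℝ (Set.range (fun j : s => U *ᵥ Pi.single (j : Fin d) 1))

lemma mulVec_eq_sum (U : Matrix (Fin d) (Fin d) ℝ) (c : Fin d → ℝ) :
    U *ᵥ c = ∑ i, c i • (U *ᵥ Pi.single i 1) := by
  have : c = ∑ i, c i • (Pi.single i 1 : Fin d → ℝ) := by
    funext j
    simp [Finset.sum_apply, Pi.single_apply]
  nth_rewrite 1 [this]
  rw [← U.mulVecLin_apply, map_sum]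
  simp [mulVecLin_apply]

lemma mem_colSpan {U : Matrix (Fin d) (Fin d) ℝ} {s : Finset (Fin d)} {z : Fin d → ℝ} :
    z ∈ colSpan U s ↔ ∃ c : Fin d → ℝ, (∀ i ∉ s, c i = 0) ∧ z = U *ᵥ c := by
  rw [colSpan, Submodule.mem_span_range_iff_exists_fun]
  constructor
  · rintro ⟨c0, hc0⟩
    refine ⟨fun i => if h : i ∈ s then c0 ⟨i, h⟩ else 0, fun i hi => by simp [hi], ?_⟩
    rw [mulVec_eq_sum, ← hc0]
    have he : ∀ i : s, c0 i • (U *ᵥ Pi.single (i : Fin d) 1)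
        = (fun x : Fin d => (if h : x ∈ s then c0 ⟨x, h⟩ else 0) • (U *ᵥ Pi.single x 1)) (i : Fin d) := by
      intro i; simp [i.2]
    rw [Fintype.sum_congr _ _ he,
      Finset.sum_coe_sort s (fun x : Fin d => (if h : x ∈ s then c0 ⟨x, h⟩ else 0) • (U *ᵥ Pi.single x 1))]
    rw [Finset.sum_subset (Finset.subset_univ s) (by intro i _ hi; simp [hi])]
  · rintro ⟨c, hc, rfl⟩
    refine ⟨fun j => c j, ?_⟩
    rw [mulVec_eq_sum,
      Finset.sum_coe_sort s (fun i => c i • (U *ᵥ Pi.single i 1))]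
    apply Finset.sum_subset (Finset.subset_univ s)
    intro i _ hi; simp [hc i hi]

lemma finrank_colSpan {U : Matrix (Fin d) (Fin d) ℝ} (hU : IsUnit U)
    (s : Finset (Fin d)) : Module.finrank ℝ (colSpan U s) = s.card := by
  have hinj : Function.Injective U.mulVecLin := by
    rw [← Matrix.mulVec_injective_iff_isUnit] at hU
    exact hU
  have hli : LinearIndependent ℝ (fun j : s => U *ᵥ Pi.single (j : Fin d) 1) := by
    have h1 : LinearIndependent ℝ (fun i : Fin d => (Pi.single i 1 : Fin d → ℝ)) := by
      have h0 := (Pi.basisFun ℝ (Fin d)).linearIndependent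
      rwa [show ⇑(Pi.basisFun ℝ (Fin d)) = fun i => (Pi.single i 1 : Fin d → ℝ)
        from funext fun i => by simp] at h0
    have h2 : LinearIndependent ℝ (fun j : s => (Pi.single (j : Fin d) 1 : Fin d → ℝ)) :=
      h1.comp _ Subtype.val_injective
    have := h2.map' U.mulVecLin (LinearMap.ker_eq_bot.2 hinj)
    exact this
  rw [colSpan, finrank_span_eq_card hli]
  simp

lemma spectral_real (A : Matrix (Fin d) (Fin d) ℝ) (hA : A.IsHermitian) :
    A = (hA.eigenvectorUnitary : Matrix (Fin d) (Fin d) ℝ) * diagonal hA.eigenvalues *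
      star (hA.eigenvectorUnitary : Matrix (Fin d) (Fin d) ℝ) := by
  have := hA.spectral_theorem
  simpa using this

lemma inv_spectral_real (A : Matrix (Fin d) (Fin d) ℝ) (hA : A.IsHermitian)
    (h0 : ∀ i, hA.eigenvalues i ≠ 0) :
    A⁻¹ = (hA.eigenvectorUnitary : Matrix (Fin d) (Fin d) ℝ) *
      diagonal (fun i => (hA.eigenvalues i)⁻¹) *
      star (hA.eigenvectorUnitary : Matrix (Fin d) (Fin d) ℝ) := by
  set U := (hA.eigenvectorUnitary : Matrix (Fin d) (Fin d) ℝ)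
  have h1 : star U * U = 1 := Unitary.coe_star_mul_self hA.eigenvectorUnitary
  have h2 : U * star U = 1 := Unitary.coe_mul_star_self hA.eigenvectorUnitary
  apply Matrix.inv_eq_right_inv
  nth_rewrite 1 [spectral_real A hA]
  calc U * diagonal hA.eigenvalues * star U * (U * diagonal (fun i => (hA.eigenvalues i)⁻¹) * star U)
      = U * diagonal hA.eigenvalues * (star U * U) * diagonal (fun i => (hA.eigenvalues i)⁻¹) * star U := by
        simp only [Matrix.mul_assoc]
    _ = U * (diagonal hA.eigenvalues * diagonal (fun i => (hA.eigenvalues i)⁻¹)) * star U := by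
        rw [h1]; simp only [Matrix.mul_one, Matrix.mul_assoc]
    _ = 1 := by
        rw [diagonal_mul_diagonal,
          show (fun i => hA.eigenvalues i * (hA.eigenvalues i)⁻¹) = fun _ => (1:ℝ)
            from funext fun i => mul_inv_cancel₀ (h0 i),
          diagonal_one, Matrix.mul_one, h2]

/-- quadratic form of a hermitian matrix in terms of eigen-coordinates -/
lemma quadForm_eq (A : Matrix (Fin d) (Fin d) ℝ) (hA : A.IsHermitian) (z : Fin d → ℝ) :
    z ⬝ᵥ (A *ᵥ z) = ∑ i, hA.eigenvalues i *
      ((star (hA.eigenvectorUnitary : Matrix (Fin d) (Fin d) ℝ) *ᵥ z) i) ^ 2 := by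
  nth_rewrite 1 [spectral_real A hA]
  exact quadDiag _ _ z

/-- Weyl-type monotonicity: sorted eigenvalues of `A` are dominated by those of `B`
when the quadratic form of `A` is dominated by that of `B`. -/
lemma eig_domination (A B : Matrix (Fin d) (Fin d) ℝ) (hA : A.IsHermitian) (hB : B.IsHermitian)
    (hq : ∀ z : Fin d → ℝ, z ⬝ᵥ (A *ᵥ z) ≤ z ⬝ᵥ (B *ᵥ z)) (k : Fin d) :
    hA.eigenvalues (Tuple.sort hA.eigenvalues k) ≤ hB.eigenvalues (Tuple.sort hB.eigenvalues k) := by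
  classical
  set σ := Tuple.sort hA.eigenvalues
  set τ := Tuple.sort hB.eigenvalues
  set UA := (hA.eigenvectorUnitary : Matrix (Fin d) (Fin d) ℝ) with hUA
  set UB := (hB.eigenvectorUnitary : Matrix (Fin d) (Fin d) ℝ) with hUB
  have hA1 : star UA * UA = 1 := Unitary.coe_star_mul_self hA.eigenvectorUnitary
  have hA2 : UA * star UA = 1 := Unitary.coe_mul_star_self hA.eigenvectorUnitary
  have hB1 : star UB * UB = 1 := Unitary.coe_star_mul_self hB.eigenvectorUnitary
  have hB2 : UB * star UB = 1 := Unitary.coe_mul_star_self hB.eigenvectorUnitary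
  have hAu : IsUnit UA := ⟨Unitary.toUnits hA.eigenvectorUnitary, rfl⟩
  have hBu : IsUnit UB := ⟨Unitary.toUnits hB.eigenvectorUnitary, rfl⟩
  set sA : Finset (Fin d) := (Finset.Ici k).image σ with hsA
  set sB : Finset (Fin d) := (Finset.Iic k).image τ with hsB
  have hcA : sA.card = d - k := by
    rw [hsA, Finset.card_image_of_injective _ σ.injective, Fin.card_Ici]
  have hcB : sB.card = (k : ℕ) + 1 := by
    rw [hsB, Finset.card_image_of_injective _ τ.injective, Fin.card_Iic]
  set V := colSpan UB sB
  set W := colSpan UA sA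
  have hrV : Module.finrank ℝ V = (k : ℕ) + 1 := by rw [finrank_colSpan hBu, hcB]
  have hrW : Module.finrank ℝ W = d - k := by rw [finrank_colSpan hAu, hcA]
  have hsup : Module.finrank ℝ ↥(V ⊔ W) ≤ d := by
    have := Submodule.finrank_le (V ⊔ W)
    simpa [Module.finrank_fin_fun] using this
  have hVW : Module.finrank ℝ ↥(V ⊓ W) ≥ 1 := by
    have := Submodule.finrank_sup_add_finrank_inf_eq V W
    have hk := k.isLt
    omega
  obtain ⟨z, hzmem, hz0⟩ := (Submodule.ne_bot_iff (V ⊓ W)).1 (by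
    intro h
    rw [h, finrank_bot] at hVW
    omega)
  obtain ⟨hzV, hzW⟩ := Submodule.mem_inf.1 hzmem
  obtain ⟨c, hcsupp, hzc⟩ := mem_colSpan.1 hzV
  obtain ⟨c', hcsupp', hzc'⟩ := mem_colSpan.1 hzW
  have hcoordB : star UB *ᵥ z = c := by
    rw [hzc, mulVec_mulVec, hB1, one_mulVec]
  have hcoordA : star UA *ᵥ z = c' := by
    rw [hzc', mulVec_mulVec, hA1, one_mulVec]
  set t := z ⬝ᵥ z with ht
  have htB : t = ∑ i, (c i) ^ 2 := by rw [ht, normSq UB hB2 z, hcoordB]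
  have htA : t = ∑ i, (c' i) ^ 2 := by rw [ht, normSq UA hA2 z, hcoordA]
  have ht0 : 0 < t := by
    rcases lt_or_eq_of_le (by rw [htB]; positivity : (0:ℝ) ≤ t) with h | h
    · exact h
    · exact absurd (dotProduct_self_eq_zero.1 h.symm) hz0
  have hquadB : z ⬝ᵥ (B *ᵥ z) ≤ hB.eigenvalues (τ k) * t := by
    rw [quadForm_eq B hB z, hcoordB, htB, Finset.mul_sum]
    apply Finset.sum_le_sum
    intro i _
    by_cases hci : c i = 0
    · simp [hci]
    · have hi : i ∈ sB := by
        by_contra hmem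
        exact hci (hcsupp i hmem)
      obtain ⟨j, hj, rfl⟩ := Finset.mem_image.1 hi
      have : hB.eigenvalues (τ j) ≤ hB.eigenvalues (τ k) :=
        Tuple.monotone_sort hB.eigenvalues (Finset.mem_Iic.1 hj)
      exact mul_le_mul_of_nonneg_right this (sq_nonneg _)
  have hquadA : hA.eigenvalues (σ k) * t ≤ z ⬝ᵥ (A *ᵥ z) := by
    rw [quadForm_eq A hA z, hcoordA, htA, Finset.mul_sum]
    apply Finset.sum_le_sum
    intro i _
    by_cases hci : c' i = 0
    · simp [hci]
    · have hi : i ∈ sA := by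
        by_contra hmem
        exact hci (hcsupp' i hmem)
      obtain ⟨j, hj, rfl⟩ := Finset.mem_image.1 hi
      have : hA.eigenvalues (σ k) ≤ hA.eigenvalues (σ j) :=
        Tuple.monotone_sort hA.eigenvalues (Finset.mem_Ici.1 hj)
      exact mul_le_mul_of_nonneg_right this (sq_nonneg _)
  have := hquadA.trans ((hq z).trans hquadB)
  exact le_of_mul_le_mul_right this ht0

/-- **Lemma 1 (after Chu et al., Lemma 2).** Let `A` be a `d × d` symmetric positive
definite real matrix all of whose eigenvalues are at least `1`, let `x ∈ ℝ^d` with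
`‖x‖₂ ≤ 1`, and let `B = A + x xᵀ`.  Then the eigenvalues `λ_1, …, λ_d` of `A` and
`ν_1, …, ν_d` of `B` can be arranged so that `λ_j ≤ ν_j` for all `j`, and
`xᵀ A⁻¹ x ≤ 10 · ∑_j (ν_j − λ_j) / λ_j`. -/
theorem eigenvalue_width_bound
    {d : ℕ} (A : Matrix (Fin d) (Fin d) ℝ)
    (hA : A.IsHermitian) (hApd : A.PosDef)
    (hone : ∀ j, 1 ≤ hA.eigenvalues j)
    (x : Fin d → ℝ) (hx : ∑ j, (x j) ^ 2 ≤ 1)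
    (hB : (A + vecMulVec x x).IsHermitian) :
    ∃ σ τ : Equiv.Perm (Fin d),
      (∀ j, hA.eigenvalues (σ j) ≤ hB.eigenvalues (τ j)) ∧
      x ⬝ᵥ (A⁻¹ *ᵥ x) ≤
        10 * ∑ j, (hB.eigenvalues (τ j) - hA.eigenvalues (σ j)) / hA.eigenvalues (σ j) := by
  classical
  set B := A + vecMulVec x x with hBdef
  set σ := Tuple.sort hA.eigenvalues with hσ
  set τ := Tuple.sort hB.eigenvalues with hτ
  refine ⟨σ, τ, ?_, ?_⟩
  all_goals {
    have hrankone : ∀ z : Fin d → ℝ, z ⬝ᵥ (vecMulVec x x *ᵥ z) = (x ⬝ᵥ z) ^ 2 := by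
      intro z
      simp only [mulVec, dotProduct, vecMulVec_apply, Finset.mul_sum, pow_two, Finset.sum_mul]
      rw [Finset.sum_comm]
      apply Finset.sum_congr rfl; intro i _
      apply Finset.sum_congr rfl; intro j _
      ring
    have hq : ∀ z : Fin d → ℝ, z ⬝ᵥ (A *ᵥ z) ≤ z ⬝ᵥ (B *ᵥ z) := by
      intro z
      rw [hBdef, add_mulVec, dotProduct_add, hrankone z]
      nlinarith [sq_nonneg (x ⬝ᵥ z)]
    have hdom : ∀ j, hA.eigenvalues (σ j) ≤ hB.eigenvalues (τ j) := fun j =>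
      eig_domination A B hA hB hq j
    first
    | exact hdom
    | {
    -- the quantitative bound
    have hlpos : ∀ i, (0:ℝ) < hA.eigenvalues i := fun i => lt_of_lt_of_le one_pos (hone i)
    have hlne : ∀ i, hA.eigenvalues i ≠ 0 := fun i => ne_of_gt (hlpos i)
    have hdetA : det A = ∏ i, hA.eigenvalues i := by
      have := hA.det_eq_prod_eigenvalues
      simpa using this
    have hdetB : det B = ∏ i, hB.eigenvalues i := by
      have := hB.det_eq_prod_eigenvalues
      simpa using this
    have hdetApos : 0 < det A := by
      rw [hdetA]
      exact Finset.prod_pos (fun i _ => hlpos i)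
    have hdet : det B = det A * (1 + x ⬝ᵥ (A⁻¹ *ᵥ x)) := by
      rw [hBdef, vecMulVec_eq Unit x x, det_add_replicateCol_mul_replicateRow hdetApos.ne'.isUnit]
      congr 1
      rw [det_unique]
      simp only [Matrix.add_apply, Matrix.one_apply_eq, Matrix.mul_apply, replicateRow_apply, replicateCol_apply,
        dotProduct, mulVec, Finset.sum_mul, Finset.mul_sum]
      congr 1
      rw [Finset.sum_comm]
      apply Finset.sum_congr rfl; intro i _
      apply Finset.sum_congr rfl; intro j _
      ring
    set s := x ⬝ᵥ (A⁻¹ *ᵥ x) with hsdef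
    set UA := (hA.eigenvectorUnitary : Matrix (Fin d) (Fin d) ℝ) with hUAdef
    have hA2 : UA * star UA = 1 := Unitary.coe_mul_star_self hA.eigenvectorUnitary
    set c := star UA *ᵥ x with hcdef
    have hseq : s = ∑ i, (hA.eigenvalues i)⁻¹ * (c i) ^ 2 := by
      rw [hsdef, inv_spectral_real A hA hlne]
      exact quadDiag _ _ x
    have hs0 : 0 ≤ s := by
      rw [hseq]
      apply Finset.sum_nonneg
      intro i _
      have := (hlpos i).le
      positivity
    have hs1 : s ≤ 1 := by
      have h1 : s ≤ ∑ i, (c i) ^ 2 := by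
        rw [hseq]
        apply Finset.sum_le_sum
        intro i _
        have hinv : (hA.eigenvalues i)⁻¹ ≤ 1 := by
          rw [inv_le_one_iff₀]
          right; exact hone i
        nlinarith [sq_nonneg (c i)]
      have h2 : ∑ i, (c i) ^ 2 = x ⬝ᵥ x := by
        rw [normSq UA hA2 x, hcdef]
      have h3 : x ⬝ᵥ x = ∑ j, (x j) ^ 2 := by
        simp only [dotProduct, pow_two]
      linarith
    have hprodl : ∏ j, hA.eigenvalues (σ j) = ∏ i, hA.eigenvalues i :=
      Equiv.prod_comp σ hA.eigenvalues
    have hprodn : ∏ j, hB.eigenvalues (τ j) = ∏ i, hB.eigenvalues i :=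
      Equiv.prod_comp τ hB.eigenvalues
    have hlspos : ∀ j, (0:ℝ) < hA.eigenvalues (σ j) := fun j => hlpos _
    have hratio_ge : ∀ j, (1:ℝ) ≤ hB.eigenvalues (τ j) / hA.eigenvalues (σ j) := fun j =>
      (one_le_div (hlspos j)).2 (hdom j)
    have hprodlpos : (0:ℝ) < ∏ j, hA.eigenvalues (σ j) :=
      Finset.prod_pos (fun j _ => hlspos j)
    have hprod : ∏ j, hB.eigenvalues (τ j) / hA.eigenvalues (σ j) = 1 + s := by
      rw [Finset.prod_div_distrib, hprodl, hprodn, ← hdetA, ← hdetB, hdet]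
      field_simp
    -- logarithms
    have h1s : (0:ℝ) < 1 + s := by linarith
    have hlog1 : Real.log (1 + s) = ∑ j, Real.log (hB.eigenvalues (τ j) / hA.eigenvalues (σ j)) := by
      rw [← hprod, Real.log_prod]
      intro j _
      exact ne_of_gt (lt_of_lt_of_le one_pos (hratio_ge j))
    have hlog2 : Real.log (1 + s) ≤
        ∑ j, (hB.eigenvalues (τ j) - hA.eigenvalues (σ j)) / hA.eigenvalues (σ j) := by
      rw [hlog1]
      apply Finset.sum_le_sum
      intro j _
      have := Real.log_le_sub_one_of_pos (lt_of_lt_of_le one_pos (hratio_ge j))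
      have heq : hB.eigenvalues (τ j) / hA.eigenvalues (σ j) - 1
          = (hB.eigenvalues (τ j) - hA.eigenvalues (σ j)) / hA.eigenvalues (σ j) := by
        rw [div_sub_one (hlne (σ j))]
      linarith [heq ▸ this]
    have hT0 : 0 ≤ ∑ j, (hB.eigenvalues (τ j) - hA.eigenvalues (σ j)) / hA.eigenvalues (σ j) := by
      apply Finset.sum_nonneg
      intro j _
      exact div_nonneg (by linarith [hdom j]) (hlspos j).le
    have hkey : s ≤ 2 * Real.log (1 + s) := by
      have hlb := Real.log_le_sub_one_of_pos (x := (1+s)⁻¹) (by positivity)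
      rw [Real.log_inv] at hlb
      have hge : s / (1+s) ≤ Real.log (1+s) := by
        have heq2 : (1+s)⁻¹ - 1 = -(s/(1+s)) := by field_simp; ring
        linarith [heq2 ▸ hlb]
      have : s / 2 ≤ s / (1+s) := by
        rw [div_le_div_iff₀ (by norm_num) h1s]
        nlinarith
      linarith
    linarith }
  }
end

section
/- In the SupLinUCB-S setting, for each agent i and stage s, if the final index set satisfies |Ψ_{i,T+1}^s| ≥ 2, then Σ_{t ∈ Ψ_{i,T+1}^s} s_{i,t} ≤ 5 √(d · |Ψ_{i,T+1}^s| · ln|Ψ_{i,T+1}^s|), where for each t ∈ Ψ_{i,T+1}^s the matrix A_{i,t} is built from the contexts with indices in Ψ_{i,t}^s = Ψ_{i,T+1}^s ∩ {1,…,t−1} and the index sets grow one element at a time (Ψ_{i,t+1}^s = Ψ_{i,t}^s ∪ {t} exactly when t ∈ Ψ_{i,T+1}^s). -/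
open Matrix

section AuxWidthBound

variable {d : ℕ}

private lemma vecMulVec_mulVec' (w v : Fin d → ℝ) :
    (vecMulVec w w) *ᵥ v = (w ⬝ᵥ v) • w := by
  ext i
  simp [mulVec, vecMulVec_apply, dotProduct, Finset.mul_sum, mul_assoc, mul_comm, mul_left_comm]

private lemma dot_vecMulVec (w v : Fin d → ℝ) :
    v ⬝ᵥ (vecMulVec w w) *ᵥ v = (w ⬝ᵥ v) ^ 2 := by
  rw [vecMulVec_mulVec', dotProduct_smul, smul_eq_mul, dotProduct_comm]
  ring

private lemma sum_mulVec' {S : Finset ℕ} (M : ℕ → Matrix (Fin d) (Fin d) ℝ) (v : Fin d → ℝ) :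
    (∑ τ ∈ S, M τ) *ᵥ v = ∑ τ ∈ S, M τ *ᵥ v :=
  map_sum (AddMonoidHom.mk' (fun A => A *ᵥ v) (fun A B => add_mulVec A B v)) _ _

private lemma dot_sum' {S : Finset ℕ} (f : ℕ → Fin d → ℝ) (v : Fin d → ℝ) :
    v ⬝ᵥ (∑ τ ∈ S, f τ) = ∑ τ ∈ S, v ⬝ᵥ f τ :=
  map_sum (AddMonoidHom.mk' (fun w => v ⬝ᵥ w) (fun a b => dotProduct_add v a b)) _ _

private lemma herm_vecMulVec (w : Fin d → ℝ) : (vecMulVec w w).IsHermitian := by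
  ext i j
  simp [conjTranspose_apply, vecMulVec_apply, mul_comm]

/-- The design matrix built from the contexts indexed by `S`. -/
noncomputable def Bmat (x : ℕ → Fin d → ℝ) (S : Finset ℕ) : Matrix (Fin d) (Fin d) ℝ :=
  (1 : Matrix (Fin d) (Fin d) ℝ) + ∑ τ ∈ S, vecMulVec (x τ) (x τ)

private lemma dot_Bmat (x : ℕ → Fin d → ℝ) (S : Finset ℕ) (v : Fin d → ℝ) :
    v ⬝ᵥ (Bmat x S) *ᵥ v = v ⬝ᵥ v + ∑ τ ∈ S, (x τ ⬝ᵥ v) ^ 2 := by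
  unfold Bmat
  rw [add_mulVec, dotProduct_add, one_mulVec, sum_mulVec', dot_sum']
  simp [dot_vecMulVec]

private lemma dot_self_nonneg (v : Fin d → ℝ) : 0 ≤ v ⬝ᵥ v := by
  apply Finset.sum_nonneg; intro i _; exact mul_self_nonneg _

private lemma Bmat_herm (x : ℕ → Fin d → ℝ) (S : Finset ℕ) : (Bmat x S).IsHermitian := by
  unfold Bmat
  exact IsHermitian.add isHermitian_one
    (by rw [Matrix.IsHermitian, conjTranspose_sum];
        exact Finset.sum_congr rfl fun τ _ => herm_vecMulVec _)

private lemma Bmat_posDef (x : ℕ → Fin d → ℝ) (S : Finset ℕ) : (Bmat x S).PosDef := by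
  refine PosDef.of_dotProduct_mulVec_pos (Bmat_herm x S) fun v hv => ?_
  have h1 : star v = v := rfl
  rw [h1, dot_Bmat]
  have h2 : (0:ℝ) < v ⬝ᵥ v :=
    (dot_self_nonneg v).lt_of_ne fun h => hv (dotProduct_self_eq_zero.mp h.symm)
  have h3 : 0 ≤ ∑ τ ∈ S, (x τ ⬝ᵥ v) ^ 2 :=
    Finset.sum_nonneg fun τ _ => sq_nonneg _
  linarith

private lemma Bmat_det_pos (x : ℕ → Fin d → ℝ) (S : Finset ℕ) : 0 < (Bmat x S).det :=
  (Bmat_posDef x S).det_pos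

private lemma Bmat_inv_apply (x : ℕ → Fin d → ℝ) (S : Finset ℕ) (v : Fin d → ℝ) :
    (Bmat x S) *ᵥ ((Bmat x S)⁻¹ *ᵥ v) = v := by
  rw [mulVec_mulVec, Matrix.mul_nonsing_inv _ (Bmat_det_pos x S).ne'.isUnit, one_mulVec]

private lemma s2_eq (x : ℕ → Fin d → ℝ) (S : Finset ℕ) (t : ℕ) :
    x t ⬝ᵥ ((Bmat x S)⁻¹ *ᵥ x t)
      = (let y := (Bmat x S)⁻¹ *ᵥ x t; y ⬝ᵥ y + ∑ τ ∈ S, (x τ ⬝ᵥ y) ^ 2) := by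
  simp only
  set y := (Bmat x S)⁻¹ *ᵥ x t with hy
  conv_lhs => rw [← Bmat_inv_apply x S (x t), ← hy]
  rw [dotProduct_comm, dotProduct_comm y, ← dot_Bmat]
  rw [dotProduct_comm]

private lemma s2_nonneg (x : ℕ → Fin d → ℝ) (S : Finset ℕ) (t : ℕ) :
    0 ≤ x t ⬝ᵥ ((Bmat x S)⁻¹ *ᵥ x t) := by
  rw [s2_eq]
  simp only
  have := dot_self_nonneg ((Bmat x S)⁻¹ *ᵥ x t)
  have h2 : 0 ≤ ∑ τ ∈ S, (x τ ⬝ᵥ ((Bmat x S)⁻¹ *ᵥ x t)) ^ 2 :=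
    Finset.sum_nonneg fun τ _ => sq_nonneg _
  linarith

private lemma s2_le_one (x : ℕ → Fin d → ℝ) (hx : ∀ t, ∑ j, (x t j) ^ 2 ≤ 1)
    (S : Finset ℕ) (t : ℕ) :
    x t ⬝ᵥ ((Bmat x S)⁻¹ *ᵥ x t) ≤ 1 := by
  set y := (Bmat x S)⁻¹ *ᵥ x t with hy
  set s := x t ⬝ᵥ y with hs
  have hynn : (0:ℝ) ≤ y ⬝ᵥ y := dot_self_nonneg y
  have hyle : y ⬝ᵥ y ≤ s := by
    rw [hs, s2_eq]
    simp only [← hy]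
    have : 0 ≤ ∑ τ ∈ S, (x τ ⬝ᵥ y) ^ 2 := Finset.sum_nonneg fun τ _ => sq_nonneg _
    linarith
  have hcs : s ^ 2 ≤ (x t ⬝ᵥ x t) * (y ⬝ᵥ y) := by
    have := Finset.sum_mul_sq_le_sq_mul_sq Finset.univ (x t) y
    simpa [hs, dotProduct, sq] using this
  have hxx : x t ⬝ᵥ x t ≤ 1 := by
    have := hx t
    simpa [dotProduct, sq] using this
  nlinarith [s2_nonneg x S t, hs ▸ s2_nonneg x S t]

private lemma Bmat_insert (x : ℕ → Fin d → ℝ) (S : Finset ℕ) (m : ℕ) (hm : m ∉ S) :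
    Bmat x (insert m S) = Bmat x S + vecMulVec (x m) (x m) := by
  unfold Bmat
  rw [Finset.sum_insert hm]
  abel

private lemma Bmat_det_insert (x : ℕ → Fin d → ℝ) (S : Finset ℕ) (m : ℕ) (hm : m ∉ S) :
    (Bmat x (insert m S)).det
      = (Bmat x S).det * (1 + x m ⬝ᵥ ((Bmat x S)⁻¹ *ᵥ x m)) := by
  rw [Bmat_insert x S m hm, vecMulVec_eq Unit,
    det_add_replicateCol_mul_replicateRow (Bmat_det_pos x S).ne'.isUnit]
  congr 1
  rw [det_unique, Matrix.mul_assoc, ← replicateCol_mulVec]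
  simp [Matrix.add_apply, Matrix.one_apply_eq, replicateRow_mul_replicateCol_apply]

private lemma log_lb {u : ℝ} (h0 : 0 ≤ u) (h1 : u ≤ 1) : u ≤ 2 * Real.log (1 + u) := by
  have hpos : (0:ℝ) < 1 + u := by linarith
  have h := Real.log_le_sub_one_of_pos (show (0:ℝ) < (1+u)⁻¹ by positivity)
  rw [Real.log_inv] at h
  have hL : 0 ≤ Real.log (1 + u) := Real.log_nonneg (by linarith)
  have hmul := mul_le_mul_of_nonneg_right h hpos.le
  have hinv : (1+u)⁻¹ * (1+u) = 1 := inv_mul_cancel₀ hpos.ne'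
  nlinarith [hmul, hL]

private lemma sum_s2_le (x : ℕ → Fin d → ℝ) (hx : ∀ t, ∑ j, (x t j) ^ 2 ≤ 1) (S : Finset ℕ) :
    ∑ t ∈ S, x t ⬝ᵥ ((Bmat x (S.filter (· < t)))⁻¹ *ᵥ x t)
      ≤ 2 * Real.log (Bmat x S).det := by
  induction S using Finset.induction_on_max with
  | empty => simp [Bmat]
  | insert a s hlt IH =>
    have ha : a ∉ s := fun h => lt_irrefl a (hlt a h)
    have hfa : (insert a s).filter (· < a) = s := by
      rw [Finset.filter_insert, if_neg (lt_irrefl a), Finset.filter_true_of_mem hlt]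
    have hsum : ∑ t ∈ s, x t ⬝ᵥ ((Bmat x ((insert a s).filter (· < t)))⁻¹ *ᵥ x t)
        = ∑ t ∈ s, x t ⬝ᵥ ((Bmat x (s.filter (· < t)))⁻¹ *ᵥ x t) := by
      refine Finset.sum_congr rfl fun t ht => ?_
      rw [Finset.filter_insert, if_neg (by exact fun h => absurd (hlt t ht) (asymm h))]
    rw [Finset.sum_insert ha, hsum, hfa]
    set u := x a ⬝ᵥ ((Bmat x s)⁻¹ *ᵥ x a) with hu
    have hu0 : 0 ≤ u := s2_nonneg x s a
    have hu1 : u ≤ 1 := s2_le_one x hx s a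
    have hkey : u ≤ 2 * Real.log (1 + u) := log_lb hu0 hu1
    have hdet : (Bmat x (insert a s)).det = (Bmat x s).det * (1 + u) :=
      Bmat_det_insert x s a ha
    rw [hdet, Real.log_mul (Bmat_det_pos x s).ne' (by linarith)]
    linarith

private lemma Bmat_trace (x : ℕ → Fin d → ℝ) (hx : ∀ t, ∑ j, (x t j) ^ 2 ≤ 1) (S : Finset ℕ) :
    (Bmat x S).trace ≤ d + S.card := by
  unfold Bmat
  rw [trace_add, trace_one, trace_sum]
  have h1 : ∀ τ ∈ S, (vecMulVec (x τ) (x τ)).trace ≤ 1 := by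
    intro τ _
    have := hx τ
    simpa [Matrix.trace, Matrix.diag, vecMulVec_apply, sq] using this
  have := Finset.sum_le_sum h1
  simp only [Finset.sum_const, nsmul_eq_mul, mul_one] at this
  simpa using this

private lemma eigen_ge_one (x : ℕ → Fin d → ℝ) (S : Finset ℕ) (i : Fin d) :
    1 ≤ (Bmat_herm x S).eigenvalues i := by
  set hH := Bmat_herm x S
  set v : EuclideanSpace ℝ (Fin d) := hH.eigenvectorBasis i with hv
  have hnorm : ‖v‖ = 1 := hH.eigenvectorBasis.orthonormal.1 i
  have hvv : (⇑v : Fin d → ℝ) ⬝ᵥ ⇑v = 1 := by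
    have h : (inner ℝ v v : ℝ) = 1 := by
      rw [real_inner_self_eq_norm_sq, hnorm]; norm_num
    rw [PiLp.inner_apply] at h
    simp only [RCLike.inner_apply, conj_trivial] at h
    simpa [dotProduct] using h
  have heq := hH.eigenvalues_eq i
  rw [heq]
  have hstar : star (⇑(hH.eigenvectorBasis i)) = ⇑(hH.eigenvectorBasis i) := star_trivial _
  rw [hstar]
  have hq := dot_Bmat x S (⇑(hH.eigenvectorBasis i))
  have hnn : 0 ≤ ∑ τ ∈ S, (x τ ⬝ᵥ ⇑(hH.eigenvectorBasis i)) ^ 2 :=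
    Finset.sum_nonneg fun τ _ => sq_nonneg _
  simp only [RCLike.re_to_real]
  rw [hq]
  have : (⇑(hH.eigenvectorBasis i) : Fin d → ℝ) ⬝ᵥ ⇑(hH.eigenvectorBasis i) = 1 := hvv
  linarith [this]

private lemma eigen_sum_eq_trace (x : ℕ → Fin d → ℝ) (S : Finset ℕ) :
    ∑ i, (Bmat_herm x S).eigenvalues i = (Bmat x S).trace := by
  set hH := Bmat_herm x S
  conv_rhs => rw [hH.spectral_theorem, Unitary.conjStarAlgAut_apply]
  rw [trace_mul_cycle]
  have hU : (star (hH.eigenvectorUnitary : Matrix (Fin d) (Fin d) ℝ)) *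
      (hH.eigenvectorUnitary : Matrix (Fin d) (Fin d) ℝ) = 1 :=
    Unitary.coe_star_mul_self _
  rw [hU, Matrix.one_mul, trace_diagonal]
  simp

private lemma log_det_le (x : ℕ → Fin d → ℝ) (hx : ∀ t, ∑ j, (x t j) ^ 2 ≤ 1) (S : Finset ℕ) :
    Real.log (Bmat x S).det ≤ d * Real.log (1 + S.card) := by
  set hH := Bmat_herm x S
  have hdet : (Bmat x S).det = ∏ i, hH.eigenvalues i := by
    have := hH.det_eq_prod_eigenvalues
    simpa using this
  have hub : ∀ j : Fin d, hH.eigenvalues j ≤ 1 + S.card := by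
    intro j
    have hsum : ∑ i, hH.eigenvalues i ≤ d + S.card :=
      (eigen_sum_eq_trace x S).le.trans (Bmat_trace x hx S)
    have hrest : ((d:ℝ) - 1) ≤ ∑ i ∈ Finset.univ.erase j, hH.eigenvalues i := by
      have hcard : (Finset.univ.erase j).card = d - 1 := by
        rw [Finset.card_erase_of_mem (Finset.mem_univ j)]
        simp
      have h := Finset.card_nsmul_le_sum (Finset.univ.erase j)
        (hH.eigenvalues) 1 (fun i _ => eigen_ge_one x S i)
      rw [hcard] at h
      have hd1 : 1 ≤ d := by have := j.isLt; omega
      calc ((d:ℝ) - 1) = ((d - 1 : ℕ) : ℝ) := by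
            rw [Nat.cast_sub hd1]; norm_num
        _ ≤ _ := by simpa using h
    have hsplit : ∑ i, hH.eigenvalues i
        = hH.eigenvalues j + ∑ i ∈ Finset.univ.erase j, hH.eigenvalues i :=
      (Finset.add_sum_erase _ _ (Finset.mem_univ j)).symm
    have : (1:ℝ) ≤ d := by
      have h0 : 0 < d := lt_of_le_of_lt (Nat.zero_le _) j.isLt
      exact_mod_cast h0
    linarith [hsplit ▸ hsum]
  have hprod : (Bmat x S).det ≤ (1 + S.card : ℝ) ^ d := by
    rw [hdet]
    calc ∏ i, hH.eigenvalues i ≤ ∏ _i : Fin d, (1 + S.card : ℝ) :=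
          Finset.prod_le_prod (fun i _ => by linarith [eigen_ge_one x S i]) (fun i _ => hub i)
      _ = (1 + S.card : ℝ) ^ d := by simp
  calc Real.log (Bmat x S).det ≤ Real.log ((1 + S.card : ℝ) ^ d) :=
        Real.log_le_log (Bmat_det_pos x S) hprod
    _ = d * Real.log (1 + S.card) := by rw [Real.log_pow]

end AuxWidthBound

/-- **Lemma 2 (after Chu et al., Lemma 3).** Let `x_t ∈ [0,1]^d` with `‖x_t‖₂ ≤ 1` be a
sequence of contexts and let `Ψ ⊆ ℕ` be a finite index set of rounds with `|Ψ| ≥ 2`,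
the index sets growing one element at a time: at round `t ∈ Ψ`, the matrix
`A_t = I_d + ∑_{τ ∈ Ψ, τ < t} x_τ x_τᵀ` is built from the contexts with indices in
`Ψ ∩ {0, …, t−1}`.  Then, with `s_t = √(x_tᵀ A_t⁻¹ x_t)`,
`∑_{t ∈ Ψ} s_t ≤ 5 √(d · |Ψ| · ln |Ψ|)`. -/
theorem sum_width_bound
    {d : ℕ} (x : ℕ → Fin d → ℝ)
    (hx01 : ∀ t j, x t j ∈ Set.Icc (0 : ℝ) 1)
    (hx : ∀ t, ∑ j, (x t j) ^ 2 ≤ 1)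
    (Ψ : Finset ℕ) (hΨ : 2 ≤ Ψ.card) :
    ∑ t ∈ Ψ,
        Real.sqrt (x t ⬝ᵥ
          (((1 : Matrix (Fin d) (Fin d) ℝ) +
              ∑ τ ∈ Ψ.filter (· < t), vecMulVec (x τ) (x τ))⁻¹ *ᵥ x t))
      ≤ 5 * Real.sqrt (d * Ψ.card * Real.log Ψ.card) := by
  show ∑ t ∈ Ψ, Real.sqrt (x t ⬝ᵥ ((Bmat x (Ψ.filter (· < t)))⁻¹ *ᵥ x t)) ≤ _
  set F : ℕ → ℝ := fun t => x t ⬝ᵥ ((Bmat x (Ψ.filter (· < t)))⁻¹ *ᵥ x t) with hF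
  set n : ℕ := Ψ.card with hn
  have hn2 : (2:ℝ) ≤ n := by exact_mod_cast hΨ
  have hlogn : 0 ≤ Real.log n := Real.log_nonneg (by linarith)
  have hX : 0 ≤ (d:ℝ) * n * Real.log n := by positivity
  have hFnn : ∀ t, 0 ≤ F t := fun t => s2_nonneg x _ t
  -- Cauchy–Schwarz step
  have hcs : (∑ t ∈ Ψ, Real.sqrt (F t)) ^ 2 ≤ n * ∑ t ∈ Ψ, F t := by
    have h := sq_sum_le_card_mul_sum_sq (s := Ψ) (f := fun t => Real.sqrt (F t))
    have heq : ∑ t ∈ Ψ, Real.sqrt (F t) ^ 2 = ∑ t ∈ Ψ, F t :=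
      Finset.sum_congr rfl fun t _ => Real.sq_sqrt (hFnn t)
    calc (∑ t ∈ Ψ, Real.sqrt (F t)) ^ 2 ≤ n * ∑ t ∈ Ψ, Real.sqrt (F t) ^ 2 := h
      _ = n * ∑ t ∈ Ψ, F t := by rw [heq]
  -- potential bound
  have hpot : ∑ t ∈ Ψ, F t ≤ 2 * ((d:ℝ) * Real.log (1 + n)) := by
    calc ∑ t ∈ Ψ, F t ≤ 2 * Real.log (Bmat x Ψ).det := sum_s2_le x hx Ψ
      _ ≤ 2 * ((d:ℝ) * Real.log (1 + n)) := by
          have := log_det_le x hx Ψ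
          linarith
  have hlog : Real.log (1 + (n:ℝ)) ≤ 2 * Real.log n := by
    have h1 : (1:ℝ) + n ≤ (n:ℝ) ^ 2 := by nlinarith
    calc Real.log (1 + (n:ℝ)) ≤ Real.log ((n:ℝ) ^ 2) :=
          Real.log_le_log (by linarith) h1
      _ = 2 * Real.log n := by rw [Real.log_pow]; norm_num
  have hsq : (∑ t ∈ Ψ, Real.sqrt (F t)) ^ 2 ≤ 25 * ((d:ℝ) * n * Real.log n) := by
    have hd0 : (0:ℝ) ≤ d := Nat.cast_nonneg d
    have h4 : (∑ t ∈ Ψ, Real.sqrt (F t)) ^ 2 ≤ n * (2 * ((d:ℝ) * (2 * Real.log n))) := by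
      refine hcs.trans ?_
      have : ∑ t ∈ Ψ, F t ≤ 2 * ((d:ℝ) * (2 * Real.log n)) := by
        refine hpot.trans ?_
        have := mul_le_mul_of_nonneg_left hlog hd0
        linarith
      nlinarith [this, hn2]
    nlinarith [h4, hlogn, hd0, hn2]
  have hLnn : 0 ≤ ∑ t ∈ Ψ, Real.sqrt (F t) :=
    Finset.sum_nonneg fun t _ => Real.sqrt_nonneg _
  calc ∑ t ∈ Ψ, Real.sqrt (F t)
      = Real.sqrt ((∑ t ∈ Ψ, Real.sqrt (F t)) ^ 2) := (Real.sqrt_sq hLnn).symm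
    _ ≤ Real.sqrt (25 * ((d:ℝ) * n * Real.log n)) := Real.sqrt_le_sqrt hsq
    _ = 5 * Real.sqrt ((d:ℝ) * n * Real.log n) := by
        rw [Real.sqrt_mul (by norm_num : (0:ℝ) ≤ 25),
          show Real.sqrt 25 = 5 by
            rw [show (25:ℝ) = 5 ^ 2 by norm_num, Real.sqrt_sq (by norm_num : (0:ℝ) ≤ 5)]]
end
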